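/- arXiv:1512.03255 — 3 statements merged into one kernel-verified Lean document; each statement's English description precedes it below -/
import Mathlib

section
/- (Recurrence relation for 2D q-Appell polynomials.) Assume a_0 ≠ 0. Then for every n ≥ 1 the following identity of polynomials in x, y holds: [n]_q · A_{n,q}(qx,y) = Σ_{k=1}^{n} [n choose k]_q q^{n−k} (α_k + [k]_q β_{k−1} y) A_{n−k,q}(x,y) + [n]_q q^{n} x · A_{n−1,q}(x,y), where A_{n,q}(qx,y) denotes the polynomial obtained from A_{n,q}(x,y) by substituting qx for x. -/
noncomputable section

open Finset MvPolynomial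

/-- The `q`-integer `[n]_q = 1 + q + ⋯ + q^(n-1)`. -/
def qInt {K : Type*} [Field K] (q : K) (n : ℕ) : K := ∑ i ∈ Finset.range n, q ^ i

/-- The `q`-factorial `[n]_q! = [1]_q [2]_q ⋯ [n]_q`. -/
def qFact {K : Type*} [Field K] (q : K) (n : ℕ) : K := ∏ k ∈ Finset.range n, qInt q (k + 1)

/-- The `q`-binomial coefficient `[n choose k]_q`. -/
def qChoose {K : Type*} [Field K] (q : K) (n k : ℕ) : K :=
  qFact q n / (qFact q k * qFact q (n - k))

/-- The partial `q`-derivative in the variable `v` (v = 0 is `x`, v = 1 is `y`),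
the linear operator determined by `D_{q,x}(x^m y^l) = [m]_q x^(m-1) y^l` and
`D_{q,y}(x^m y^l) = [l]_q x^m y^(l-1)`. -/
def qDeriv {K : Type*} [Field K] (q : K) (v : Fin 2) (P : MvPolynomial (Fin 2) K) :
    MvPolynomial (Fin 2) K :=
  ∑ m ∈ P.support, monomial (m - Finsupp.single v 1) (P.coeff m * qInt q (m v))

/-- Substitution `x ↦ c·x` in a polynomial in the two variables `x = X 0`, `y = X 1`. -/
def substX {K : Type*} [Field K] (c : K) (P : MvPolynomial (Fin 2) K) :
    MvPolynomial (Fin 2) K :=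
  aeval (fun i : Fin 2 => if i = 0 then C c * X 0 else X 1) P

/-- Substitution `y ↦ c·y` in a polynomial in the two variables `x = X 0`, `y = X 1`. -/
def substY {K : Type*} [Field K] (c : K) (P : MvPolynomial (Fin 2) K) :
    MvPolynomial (Fin 2) K :=
  aeval (fun i : Fin 2 => if i = 0 then X 0 else C c * X 1) P

/-- The 2D `q`-Appell polynomials attached to a coefficient sequence `a`:
`A_{n,q}(x,y) = Σ_{i+j+k=n} ([n]_q!/([i]_q![j]_q![k]_q!)) a_i q^(k(k-1)/2) x^j y^k`. -/
def appell {K : Type*} [Field K] (q : K) (a : ℕ → K) (n : ℕ) : MvPolynomial (Fin 2) K :=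
  ∑ i ∈ Finset.range (n + 1), ∑ j ∈ Finset.range (n + 1 - i),
    monomial (Finsupp.single (0 : Fin 2) j + Finsupp.single (1 : Fin 2) (n - i - j))
      (qFact q n / (qFact q i * qFact q j * qFact q (n - i - j)) * a i *
        q ^ ((n - i - j) * (n - i - j - 1) / 2))


section Aux
variable {K : Type*} [Field K]

lemma qInt_zero (q : K) : qInt q 0 = 0 := by simp [qInt]

lemma qFact_zero (q : K) : qFact q 0 = 1 := by simp [qFact]

lemma qFact_succ (q : K) (n : ℕ) : qFact q (n+1) = qFact q n * qInt q (n+1) := by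
  rw [qFact, qFact, Finset.prod_range_succ]

lemma qInt_add (q : K) (a b : ℕ) : qInt q (a + b) = qInt q a + q ^ a * qInt q b := by
  rw [qInt, qInt, qInt, Finset.sum_range_add, Finset.mul_sum]
  congr 1
  refine Finset.sum_congr rfl fun i _ => ?_
  rw [pow_add]

lemma qFact_ne_zero {q : K} (hq : ∀ n : ℕ, 1 ≤ n → qInt q n ≠ 0) (n : ℕ) :
    qFact q n ≠ 0 := by
  rw [qFact]
  exact Finset.prod_ne_zero_iff.2 fun k _ => hq (k+1) (by omega)

lemma tri (l : ℕ) (hl : 1 ≤ l) : l * (l-1) / 2 = (l-1) * (l-2) / 2 + (l-1) := by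
  obtain ⟨k, rfl⟩ : ∃ k, l = k + 1 := ⟨l - 1, by omega⟩
  rcases k with _ | r
  · rfl
  · rw [show r+1+1-1 = r+1 from by omega, show r+1+1-2 = r from by omega,
      show (r+1+1) * (r+1) = (r+1) * r + 2 * (r+1) from by ring,
      Nat.add_mul_div_left _ _ (by norm_num : (0:ℕ) < 2)]

lemma sum_shift {M : Type*} [AddCommMonoid M] (n m : ℕ) (h : m ≤ n) (f : ℕ → M)
    (h0 : f 0 = 0) (hb : ∀ k, m < k → k ≤ n → f k = 0) :
    ∑ k ∈ Finset.Icc 1 n, f k = ∑ k ∈ Finset.range (m+1), f k := by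
  have e1 : ∑ k ∈ Finset.Icc 1 m, f k = ∑ k ∈ Finset.Icc 1 n, f k := by
    apply Finset.sum_subset
    · exact Finset.Icc_subset_Icc le_rfl h
    · intro x hx hnx
      simp only [Finset.mem_Icc] at hx hnx
      exact hb x (by omega) (by omega)
  have e2 : ∑ k ∈ Finset.Icc 1 m, f k = ∑ k ∈ Finset.range (m+1), f k := by
    apply Finset.sum_subset
    · intro x hx
      simp only [Finset.mem_Icc] at hx
      simp only [Finset.mem_range]
      omega
    · intro x hx hnx
      simp only [Finset.mem_range] at hx
      simp only [Finset.mem_Icc] at hnx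
      have : x = 0 := by omega
      rw [this, h0]
  rw [← e1, e2]

def sp (j l : ℕ) : Fin 2 →₀ ℕ := Finsupp.single 0 j + Finsupp.single 1 l

lemma sp_apply0 (j l : ℕ) : sp j l 0 = j := by
  simp [sp, Finsupp.single_apply]

lemma sp_apply1 (j l : ℕ) : sp j l 1 = l := by
  simp [sp, Finsupp.single_apply]

lemma sp_inj {j l j' l' : ℕ} : sp j l = sp j' l' ↔ j = j' ∧ l = l' := by
  constructor
  · intro h
    constructor
    · have := congrArg (fun f : Fin 2 →₀ ℕ => f 0) h
      simpa [sp_apply0] using this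
    · have := congrArg (fun f : Fin 2 →₀ ℕ => f 1) h
      simpa [sp_apply1] using this
  · rintro ⟨rfl, rfl⟩; rfl

lemma eq_sp (d : Fin 2 →₀ ℕ) : d = sp (d 0) (d 1) := by
  ext i
  fin_cases i
  · simp [sp_apply0]
  · simp [sp_apply1]

lemma coeff_double (n j l : ℕ) (f : ℕ → ℕ → K) :
    coeff (sp j l) (∑ i ∈ Finset.range (n+1), ∑ j' ∈ Finset.range (n+1-i),
      monomial (sp j' (n-i-j')) (f i j'))
    = if j + l ≤ n then f (n-j-l) j else 0 := by
  rw [coeff_sum]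
  have h1 : ∀ i ∈ Finset.range (n+1),
      coeff (sp j l) (∑ j' ∈ Finset.range (n+1-i), monomial (sp j' (n-i-j')) (f i j'))
      = if i + j + l = n then f i j else 0 := by
    intro i hi
    rw [Finset.mem_range] at hi
    rw [coeff_sum]
    by_cases h : i + j + l = n
    · rw [if_pos h]
      rw [Finset.sum_eq_single j]
      · rw [coeff_monomial, if_pos (by rw [sp_inj]; exact ⟨rfl, by omega⟩)]
      · intro j' _ hj'
        rw [coeff_monomial, if_neg]
        intro he
        exact hj' (sp_inj.1 he).1
      · intro hj
        rw [Finset.mem_range] at hj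
        omega
    · rw [if_neg h]
      apply Finset.sum_eq_zero
      intro j' hj'
      rw [Finset.mem_range] at hj'
      rw [coeff_monomial, if_neg]
      intro he
      obtain ⟨rfl, h2⟩ := sp_inj.1 he
      omega
  rw [Finset.sum_congr rfl h1]
  by_cases h : j + l ≤ n
  · rw [if_pos h, Finset.sum_eq_single (n - j - l)]
    · rw [if_pos (by omega)]
    · intro i _ hi
      rw [if_neg (by omega)]
    · intro h2
      rw [Finset.mem_range] at h2
      omega
  · rw [if_neg h]
    apply Finset.sum_eq_zero
    intro i hi
    rw [Finset.mem_range] at hi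
    rw [if_neg (by omega)]

/-- The generic coefficient of `appell`. -/
def ac (q : K) (a : ℕ → K) (n j l : ℕ) : K :=
  if j + l ≤ n then
    qFact q n / (qFact q (n-j-l) * qFact q j * qFact q l) * a (n-j-l) * q ^ (l * (l-1) / 2)
  else 0

lemma appell_def' (q : K) (a : ℕ → K) (n : ℕ) :
    appell q a n = ∑ i ∈ Finset.range (n+1), ∑ j' ∈ Finset.range (n+1-i),
      monomial (sp j' (n-i-j'))
        (qFact q n / (qFact q i * qFact q j' * qFact q (n-i-j')) * a i *
          q ^ ((n-i-j') * ((n-i-j') - 1) / 2)) := rfl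

lemma coeff_appell (q : K) (a : ℕ → K) (n j l : ℕ) :
    coeff (sp j l) (appell q a n) = ac q a n j l := by
  rw [appell_def', coeff_double, ac]
  by_cases h : j + l ≤ n
  · rw [if_pos h, if_pos h, show n - (n-j-l) - j = l from by omega]
  · rw [if_neg h, if_neg h]

lemma monomial_sp (j l : ℕ) (r : K) :
    (monomial (sp j l) r : MvPolynomial (Fin 2) K) = C r * X 0 ^ j * X 1 ^ l := by
  rw [mul_assoc, X_pow_eq_monomial, X_pow_eq_monomial, monomial_mul, C_mul_monomial, sp]
  simp

lemma substX_monomial (c : K) (j l : ℕ) (r : K) :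
    substX c (monomial (sp j l) r) = monomial (sp j l) (c ^ j * r) := by
  rw [monomial_sp, monomial_sp, substX, map_mul, map_mul, map_pow, map_pow,
    aeval_X, aeval_X, aeval_C]
  simp only [eq_self_iff_true, if_true, if_neg (show (1 : Fin 2) ≠ 0 by decide)]
  rw [mul_pow, ← C_pow, algebraMap_eq, map_mul]
  ring

lemma coeff_substX_appell (q : K) (a : ℕ → K) (n j l : ℕ) :
    coeff (sp j l) (substX q (appell q a n)) = q ^ j * ac q a n j l := by
  have h : substX q (appell q a n) = ∑ i ∈ Finset.range (n+1), ∑ j' ∈ Finset.range (n+1-i),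
      monomial (sp j' (n-i-j'))
        (q ^ j' * (qFact q n / (qFact q i * qFact q j' * qFact q (n-i-j')) * a i *
          q ^ ((n-i-j') * ((n-i-j') - 1) / 2))) := by
    rw [appell_def', substX]
    rw [map_sum]
    refine Finset.sum_congr rfl fun i _ => ?_
    rw [map_sum]
    refine Finset.sum_congr rfl fun j' _ => ?_
    exact substX_monomial q j' (n-i-j') _
  rw [h, coeff_double, ac]
  by_cases hc : j + l ≤ n
  · rw [if_pos hc, if_pos hc, show n - (n-j-l) - j = l from by omega]
  · rw [if_neg hc, if_neg hc, mul_zero]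

lemma coeff_X1_mul (P : MvPolynomial (Fin 2) K) (j l : ℕ) :
    coeff (sp j l) (X 1 * P) = if l = 0 then 0 else coeff (sp j (l-1)) P := by
  rw [mul_comm, coeff_mul_X']
  by_cases hl : l = 0
  · rw [if_pos hl, if_neg]
    simp [Finsupp.mem_support_iff, sp, Finsupp.single_apply, hl]
  · rw [if_neg hl, if_pos, show sp j l - Finsupp.single 1 1 = sp j (l-1) from ?_]
    · ext i
      fin_cases i <;> simp [sp, Finsupp.single_apply]
    · simp [Finsupp.mem_support_iff, sp, Finsupp.single_apply, hl]

lemma coeff_X0_mul (P : MvPolynomial (Fin 2) K) (j l : ℕ) :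
    coeff (sp j l) (X 0 * P) = if j = 0 then 0 else coeff (sp (j-1) l) P := by
  rw [mul_comm, coeff_mul_X']
  by_cases hj : j = 0
  · rw [if_pos hj, if_neg]
    simp [Finsupp.mem_support_iff, sp, Finsupp.single_apply, hj]
  · rw [if_neg hj, if_pos, show sp j l - Finsupp.single 0 1 = sp (j-1) l from ?_]
    · ext i
      fin_cases i <;> simp [sp, Finsupp.single_apply]
    · simp [Finsupp.mem_support_iff, sp, Finsupp.single_apply, hj]

end Aux

set_option maxHeartbeats 1600000 in
/-- Recurrence relation for 2D `q`-Appell polynomials: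
`[n]_q A_{n,q}(qx,y) = Σ_{k=1}^n [n choose k]_q q^(n-k) (α_k + [k]_q β_(k-1) y) A_{n-k,q}(x,y)
  + [n]_q q^n x A_{n-1,q}(x,y)`. -/
theorem appell_recurrence
    {K : Type*} [Field K] [CharZero K] (q : K) (hq0 : q ≠ 0) (hq1 : q ≠ 1)
    (hq : ∀ n : ℕ, 1 ≤ n → qInt q n ≠ 0)
    (a : ℕ → K) (ha0 : a 0 ≠ 0)
    (α β : ℕ → K)
    (hα : PowerSeries.mk (fun n => if n = 0 then (0 : K) else a n / qFact q (n - 1)) =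
      PowerSeries.mk (fun n => α n / qFact q n) *
        PowerSeries.mk (fun n => a n * q ^ n / qFact q n))
    (hβ : PowerSeries.mk (fun n => a n / qFact q n) =
      PowerSeries.mk (fun n => β n / qFact q n) *
        PowerSeries.mk (fun n => a n * q ^ n / qFact q n))
    (n : ℕ) (hn : 1 ≤ n) :
    C (qInt q n) * substX q (appell q a n) =
      (∑ k ∈ Finset.Icc 1 n, C (qChoose q n k * q ^ (n - k)) *
        (C (α k) + C (qInt q k * β (k - 1)) * X 1) * appell q a (n - k)) +
      C (qInt q n * q ^ n) * X 0 * appell q a (n - 1) := by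
  have hF := qFact_ne_zero hq
  -- coefficient form of hα
  have hA : ∀ s : ℕ, (if s = 0 then (0:K) else a s / qFact q (s-1)) =
      ∑ p ∈ Finset.range (s+1), α p / qFact q p * (a (s-p) * q^(s-p) / qFact q (s-p)) := by
    intro s
    have h := congrArg (PowerSeries.coeff s) hα
    rw [PowerSeries.coeff_mk, PowerSeries.coeff_mul,
      Finset.Nat.sum_antidiagonal_eq_sum_range_succ_mk] at h
    simpa only [PowerSeries.coeff_mk] using h
  have hB : ∀ s : ℕ, a s / qFact q s =
      ∑ p ∈ Finset.range (s+1), β p / qFact q p * (a (s-p) * q^(s-p) / qFact q (s-p)) := by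
    intro s
    have h := congrArg (PowerSeries.coeff s) hβ
    rw [PowerSeries.coeff_mk, PowerSeries.coeff_mul,
      Finset.Nat.sum_antidiagonal_eq_sum_range_succ_mk] at h
    simpa only [PowerSeries.coeff_mk] using h
  have hα0 : α 0 = 0 := by
    have h := (hA 0).symm
    rw [if_pos rfl, Finset.sum_range_one] at h
    simp only [Nat.sub_zero, qFact_zero, pow_zero, div_one, mul_one] at h
    rcases mul_eq_zero.1 h with h' | h'
    · exact h'
    · exact absurd h' ha0
  have hαc : ∀ s : ℕ, (∑ p ∈ Finset.range (s+1),
      α p / qFact q p * (a (s-p) * q^(s-p) / qFact q (s-p))) = qInt q s * a s / qFact q s := by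
    intro s
    rcases Nat.eq_zero_or_pos s with rfl | hs
    · rw [qInt_zero]
      simp [hα0]
    · rw [← hA s, if_neg (by omega)]
      have hFs : qFact q s = qFact q (s-1) * qInt q s := by
        conv_lhs => rw [show s = (s-1)+1 from by omega]
        rw [qFact_succ, show s-1+1 = s from by omega]
      rw [hFs]
      field_simp [hF (s-1), hq s hs]
  -- compare coefficients
  apply MvPolynomial.ext
  intro d
  rw [eq_sp d]
  generalize d 0 = j
  generalize d 1 = l
  rw [coeff_C_mul, coeff_substX_appell, coeff_add, coeff_sum]
  rw [show (C (qInt q n * q ^ n) * X 0 * appell q a (n-1) : MvPolynomial (Fin 2) K)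
      = C (qInt q n * q ^ n) * (X 0 * appell q a (n-1)) from by ring,
    coeff_C_mul, coeff_X0_mul]
  have hterm : ∀ k ∈ Finset.Icc 1 n,
      coeff (sp j l) (C (qChoose q n k * q ^ (n-k)) *
        (C (α k) + C (qInt q k * β (k-1)) * X 1) * appell q a (n-k))
      = qChoose q n k * q^(n-k) * α k * ac q a (n-k) j l
        + qChoose q n k * q^(n-k) * (qInt q k * β (k-1)) *
          (if l = 0 then 0 else ac q a (n-k) j (l-1)) := by
    intro k _
    rw [show C (qChoose q n k * q ^ (n-k)) * (C (α k) + C (qInt q k * β (k-1)) * X 1) *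
          appell q a (n-k)
        = C (qChoose q n k * q^(n-k) * α k) * appell q a (n-k)
          + C (qChoose q n k * q^(n-k) * (qInt q k * β (k-1))) * (X 1 * appell q a (n-k)) from by
      simp only [map_mul]; ring]
    rw [coeff_add, coeff_C_mul, coeff_C_mul, coeff_X1_mul]
    simp only [coeff_appell]
  rw [Finset.sum_congr rfl hterm, Finset.sum_add_distrib]
  simp only [coeff_appell]
  by_cases hjl : j + l ≤ n
  · -- main case
    set m := n - j - l with hm
    have hSA : (∑ k ∈ Finset.Icc 1 n, qChoose q n k * q^(n-k) * α k * ac q a (n-k) j l)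
        = qFact q n / (qFact q j * qFact q l) * q^(l*(l-1)/2) * q^(j+l) *
          (qInt q m * a m / qFact q m) := by
      rw [sum_shift n m (by omega)
        (fun k => qChoose q n k * q^(n-k) * α k * ac q a (n-k) j l) ?_ ?_]
      · rw [← hαc m, Finset.mul_sum]
        refine Finset.sum_congr rfl fun k hk => ?_
        rw [Finset.mem_range] at hk
        simp only [ac]
        rw [if_pos (by omega), qChoose, show n - k - j - l = m - k from by omega,
          show n - k = (j+l) + (m-k) from by omega, pow_add]
        field_simp [hF j, hF l, hF m, hF k, hF (m-k), hF (j + l + (m-k))]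
      · simp [hα0]
      · intro k hk hk2
        simp only [ac]
        rw [if_neg (by omega), mul_zero]
    rw [hSA]
    by_cases hl : l = 0
    · -- no beta part
      have hSB0 : (∑ k ∈ Finset.Icc 1 n, qChoose q n k * q^(n-k) * (qInt q k * β (k-1)) *
          (if l = 0 then 0 else ac q a (n-k) j (l-1))) = 0 := by
        apply Finset.sum_eq_zero
        intro k _
        rw [if_pos hl, mul_zero]
      rw [hSB0]
      subst hl
      by_cases hj : j = 0
      · subst hj
        rw [if_pos rfl]
        simp only [ac]
        rw [if_pos hjl, show n - 0 - 0 = n from by omega, show m = n from by omega]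
        field_simp [hF n, qFact_zero]
        try ring
      · simp only [ac]
        rw [if_pos hjl, if_neg hj, if_pos (show (j-1) + 0 ≤ n - 1 from by omega),
          show n - 1 - (j-1) - 0 = m from by omega, show n - j - 0 = m from by omega]
        have hFn : qFact q n = qFact q (n-1) * qInt q n := by
          conv_lhs => rw [show n = (n-1)+1 from by omega]
          rw [qFact_succ, show n-1+1 = n from by omega]
        have hFj : qFact q j = qFact q (j-1) * qInt q j := by
          conv_lhs => rw [show j = (j-1)+1 from by omega]
          rw [qFact_succ, show j-1+1 = j from by omega]
        have hqn : qInt q n = qInt q 0 + q^0 * qInt q m + q^(0+m) * qInt q j := by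
          rw [show n = 0 + (m + j) from by omega, qInt_add, qInt_add, pow_add]
          ring
        have hpn : q^n = q^0 * q^m * q^j := by
          rw [show n = 0 + (m+j) from by omega, pow_add, pow_add]
          ring
        rw [hFn, hFj, hqn, hpn, qInt_zero]
        field_simp [hF (n-1), hF (j-1), hF m, hq j (by omega), qFact_zero]
        ring
    · -- beta part present
      have hl1 : 1 ≤ l := by omega
      have hSB : (∑ k ∈ Finset.Icc 1 n, qChoose q n k * q^(n-k) * (qInt q k * β (k-1)) *
          (if l = 0 then 0 else ac q a (n-k) j (l-1)))
          = qFact q n * qInt q l / (qFact q j * qFact q l) * q^(l*(l-1)/2) * q^j *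
            (a m / qFact q m) := by
        have hFl : qFact q l = qFact q (l-1) * qInt q l := by
          conv_lhs => rw [show l = (l-1)+1 from by omega]
          rw [qFact_succ, show l-1+1 = l from by omega]
        rw [sum_shift n (m+1) (by omega)
          (fun k => qChoose q n k * q^(n-k) * (qInt q k * β (k-1)) *
            (if l = 0 then 0 else ac q a (n-k) j (l-1))) ?_ ?_]
        · rw [Finset.sum_range_succ']
          simp only [qInt_zero, mul_zero, zero_mul, add_zero]
          rw [hB m, Finset.mul_sum]
          refine Finset.sum_congr rfl fun p hp => ?_
          rw [Finset.mem_range] at hp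
          simp only [ac]
          rw [if_neg hl, if_pos (by omega), qChoose,
            show n - (p+1) - j - (l-1) = m - p from by omega,
            show p + 1 - 1 = p from by omega,
            qFact_succ q p,
            show n - (p+1) = (j + (l-1)) + (m-p) from by omega,
            show l - 1 - 1 = l - 2 from by omega,
            tri l hl1, pow_add, pow_add, hFl]
          field_simp [hF p, hF (m-p), hF (j + (l-1) + (m-p)), hF (l-1), hF j, hF m,
            hq (p+1) (by omega), hq l hl1]
          ring
        · simp [qInt_zero]
        · intro k hk hk2
          simp only [ac]
          rw [if_neg hl, if_neg (by omega), mul_zero]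
      rw [hSB]
      simp only [ac]
      rw [if_pos hjl]
      by_cases hj : j = 0
      · subst hj
        rw [if_pos rfl, show n - 0 - l = m from by omega]
        have hqn : qInt q n = qInt q l + q^l * qInt q m + q^(l+m) * qInt q 0 := by
          rw [show n = l + (m + 0) from by omega, qInt_add, qInt_add, pow_add]
          ring
        rw [hqn, qInt_zero]
        field_simp [hF m, hF l, qFact_zero]
        ring
      · rw [if_neg hj, if_pos (show (j-1) + l ≤ n - 1 from by omega),
          show n - 1 - (j-1) - l = m from by omega, show n - j - l = m from by omega]
        have hFn : qFact q n = qFact q (n-1) * qInt q n := by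
          conv_lhs => rw [show n = (n-1)+1 from by omega]
          rw [qFact_succ, show n-1+1 = n from by omega]
        have hFj : qFact q j = qFact q (j-1) * qInt q j := by
          conv_lhs => rw [show j = (j-1)+1 from by omega]
          rw [qFact_succ, show j-1+1 = j from by omega]
        have hqn : qInt q n = qInt q l + q^l * qInt q m + q^(l+m) * qInt q j := by
          rw [show n = l + (m + j) from by omega, qInt_add, qInt_add, pow_add]
          ring
        have hpn : q^n = q^l * q^m * q^j := by
          rw [show n = l + (m+j) from by omega, pow_add, pow_add]
          ring
        have e3 : qInt q n * q^n *
            (qFact q (n-1) / (qFact q m * qFact q (j-1) * qFact q l) * a m * q^(l*(l-1)/2))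
            = qFact q n / (qFact q m * qFact q j * qFact q l) * a m * q^(l*(l-1)/2) * q^j *
              (q^(l+m) * qInt q j) := by
          rw [hFn, hFj, hpn]
          field_simp [hF m, hF (j-1), hF l, hF (n-1), hq j (by omega)]
          try ring
        linear_combination (qFact q n / (qFact q m * qFact q j * qFact q l) * a m *
          q^(l*(l-1)/2) * q^j) * hqn - e3
  · -- degenerate case: everything vanishes
    have z1 : (∑ k ∈ Finset.Icc 1 n, qChoose q n k * q^(n-k) * α k * ac q a (n-k) j l) = 0 := by
      apply Finset.sum_eq_zero
      intro k hk
      rw [Finset.mem_Icc] at hk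
      simp only [ac]
      rw [if_neg (by omega), mul_zero]
    have z2 : (∑ k ∈ Finset.Icc 1 n, qChoose q n k * q^(n-k) * (qInt q k * β (k-1)) *
        (if l = 0 then 0 else ac q a (n-k) j (l-1))) = 0 := by
      apply Finset.sum_eq_zero
      intro k hk
      rw [Finset.mem_Icc] at hk
      by_cases hl : l = 0
      · rw [if_pos hl, mul_zero]
      · rw [if_neg hl]
        simp only [ac]
        rw [if_neg (by omega), mul_zero]
    have z3 : (if j = 0 then (0:K) else ac q a (n-1) (j-1) l) = 0 := by
      by_cases hj : j = 0
      · rw [if_pos hj]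
      · rw [if_neg hj]
        simp only [ac]
        rw [if_neg (by omega)]
    rw [z1, z2, z3]
    simp only [ac]
    rw [if_neg hjl]
    ring
end
end

section
/- (Equivalent form of the recurrence relation for 2D q-Appell polynomials.) Assume a_0 ≠ 0. Then for every n ≥ 1: A_{n,q}(qx,y) = q^{n}(x + q^{−1}(α_1 + β_0 y)) · A_{n−1,q}(x,y) + (1/[n]_q) Σ_{k=1}^{n−1} [n choose k−1]_q q^{k−1} (α_{n−k+1} + [n−k+1]_q β_{n−k} y) A_{k−1,q}(x,y), where A_{n,q}(qx,y) denotes the polynomial obtained from A_{n,q}(x,y) by substituting qx for x. -/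
noncomputable section

open Finset MvPolynomial

namespace AppellRec

variable {K : Type*} [Field K]

theorem qInt_one (q : K) : qInt q 1 = 1 := by simp [qInt]

theorem qFact_zero (q : K) : qFact q 0 = 1 := by simp [qFact]

theorem qFact_succ (q : K) (n : ℕ) : qFact q (n + 1) = qFact q n * qInt q (n + 1) :=
  Finset.prod_range_succ _ n

theorem qFact_one (q : K) : qFact q 1 = 1 := by
  rw [qFact_succ, qFact_zero, qInt_one, one_mul]

theorem qFact_ne_zero {q : K} (hq : ∀ n : ℕ, 1 ≤ n → qInt q n ≠ 0) (n : ℕ) :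
    qFact q n ≠ 0 :=
  Finset.prod_ne_zero_iff.2 fun k _ => hq (k + 1) (Nat.le_add_left 1 k)

theorem one_sub_mul_qInt (q : K) (n : ℕ) : (1 - q) * qInt q n = 1 - q ^ n := by
  have h := geom_sum_mul q n
  unfold qInt
  linear_combination -h

theorem tri_succ (n : ℕ) : (n + 1) * n / 2 = n * (n - 1) / 2 + n := by
  have h1 : (n + 1).choose 2 = (n + 1) * n / 2 := by rw [Nat.choose_two_right]; simp
  rw [← h1, ← Nat.choose_two_right, Nat.choose_succ_succ]
  simp [Nat.add_comm]


/-- generic series `Σ C (c n / [n]!) t^n` -/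
def Gser (q : K) (c : ℕ → K) : PowerSeries (MvPolynomial (Fin 2) K) :=
  PowerSeries.mk fun n => C (c n / qFact q n)

def Dser (q : K) (a : ℕ → K) : PowerSeries (MvPolynomial (Fin 2) K) :=
  PowerSeries.mk fun n => C (if n = 0 then (0 : K) else a n / qFact q (n - 1))

def Ex (q : K) : PowerSeries (MvPolynomial (Fin 2) K) :=
  PowerSeries.mk fun n => C (qFact q n)⁻¹ * X 0 ^ n

def Ey (q : K) : PowerSeries (MvPolynomial (Fin 2) K) :=
  PowerSeries.mk fun n => C (q ^ (n * (n - 1) / 2) / qFact q n) * X 1 ^ n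

def Fser (q : K) (a : ℕ → K) : PowerSeries (MvPolynomial (Fin 2) K) :=
  PowerSeries.mk fun n => C (qFact q n)⁻¹ * appell q a n

def Sser (q : K) (a : ℕ → K) : PowerSeries (MvPolynomial (Fin 2) K) :=
  PowerSeries.mk fun n => C (qFact q n)⁻¹ * substX q (appell q a n)

/-- substX as a ring hom -/
def phi (q : K) : MvPolynomial (Fin 2) K →+* MvPolynomial (Fin 2) K :=
  (aeval (fun i : Fin 2 => if i = 0 then C q * X 0 else X 1)).toRingHom

theorem substX_eq_phi (q : K) (P : MvPolynomial (Fin 2) K) : substX q P = phi q P := rfl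

theorem phi_C (q c : K) : phi q (C c) = C c := by
  simp [phi, algebraMap_eq]

theorem phi_X0 (q : K) : phi q (X 0) = C q * X 0 := by simp [phi]

theorem phi_X1 (q : K) : phi q (X 1) = X 1 := by
  simp [phi]

theorem monomial2 (j k : ℕ) (c : K) :
    (monomial (Finsupp.single (0 : Fin 2) j + Finsupp.single (1 : Fin 2) k) c :
      MvPolynomial (Fin 2) K) = C c * X 0 ^ j * X 1 ^ k := by
  rw [monomial_add_single, C_mul_X_pow_eq_monomial]

theorem coeff_GExEy (q : K) (c : ℕ → K) (n : ℕ) :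
    PowerSeries.coeff n (Gser q c * Ex q * Ey q) =
      ∑ i ∈ Finset.range (n + 1), ∑ j ∈ Finset.range (n - i + 1),
        C (c i / qFact q i * (qFact q j)⁻¹ *
            (q ^ ((n - i - j) * (n - i - j - 1) / 2) / qFact q (n - i - j))) *
          (X 0 ^ j * X 1 ^ (n - i - j)) := by
  rw [mul_assoc, PowerSeries.coeff_mul, Finset.Nat.sum_antidiagonal_eq_sum_range_succ_mk]
  refine Finset.sum_congr rfl fun i hi => ?_
  rw [PowerSeries.coeff_mul, Finset.Nat.sum_antidiagonal_eq_sum_range_succ_mk, Finset.mul_sum]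
  refine Finset.sum_congr rfl fun j hj => ?_
  simp only [Gser, Ex, Ey, PowerSeries.coeff_mk]
  rw [C_mul, C_mul]
  ring

theorem L0 {q : K} (hq : ∀ n : ℕ, 1 ≤ n → qInt q n ≠ 0) (a : ℕ → K) :
    Fser q a = Gser q a * Ex q * Ey q := by
  refine PowerSeries.ext fun n => ?_
  rw [coeff_GExEy]
  simp only [Fser, PowerSeries.coeff_mk, appell, Finset.mul_sum]
  refine Finset.sum_congr rfl fun i hi => ?_
  have hi' : i ≤ n := Nat.lt_succ_iff.mp (Finset.mem_range.mp hi)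
  have hrange : n + 1 - i = n - i + 1 := by omega
  rw [hrange]
  refine Finset.sum_congr rfl fun j hj => ?_
  rw [monomial2]
  have h1 := qFact_ne_zero hq n
  have h2 := qFact_ne_zero hq i
  have h3 := qFact_ne_zero hq j
  have h4 := qFact_ne_zero hq (n - i - j)
  have key : (qFact q n)⁻¹ * (qFact q n / (qFact q i * qFact q j * qFact q (n - i - j)) * a i *
        q ^ ((n - i - j) * (n - i - j - 1) / 2)) =
      a i / qFact q i * (qFact q j)⁻¹ *
        (q ^ ((n - i - j) * (n - i - j - 1) / 2) / qFact q (n - i - j)) := by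
    field_simp
  conv_rhs => rw [← key, C_mul]
  ring

def ExQ (q : K) : PowerSeries (MvPolynomial (Fin 2) K) :=
  PowerSeries.mk fun n => C (q ^ n * (qFact q n)⁻¹) * X 0 ^ n

def EyQ (q : K) : PowerSeries (MvPolynomial (Fin 2) K) :=
  PowerSeries.mk fun n => C (q ^ n * (q ^ (n * (n - 1) / 2) / qFact q n)) * X 1 ^ n

def GserQ (q : K) (c : ℕ → K) : PowerSeries (MvPolynomial (Fin 2) K) :=
  PowerSeries.mk fun n => C (q ^ n * (c n / qFact q n))

def FQ (q : K) (a : ℕ → K) : PowerSeries (MvPolynomial (Fin 2) K) :=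
  PowerSeries.mk fun n => C (q ^ n) * (C (qFact q n)⁻¹ * appell q a n)

theorem r1 (q : K) (c : ℕ → K) :
    PowerSeries.rescale (C q) (Gser q c) = GserQ q c := by
  refine PowerSeries.ext fun n => ?_
  rw [PowerSeries.coeff_rescale]
  simp only [Gser, GserQ, PowerSeries.coeff_mk]
  rw [← C_pow, ← C_mul]

theorem r2 (q : K) : PowerSeries.rescale (C q) (Ex q) = ExQ q := by
  refine PowerSeries.ext fun n => ?_
  rw [PowerSeries.coeff_rescale]
  simp only [Ex, ExQ, PowerSeries.coeff_mk]
  rw [← C_pow, ← mul_assoc, ← C_mul]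

theorem r3 (q : K) : PowerSeries.rescale (C q) (Ey q) = EyQ q := by
  refine PowerSeries.ext fun n => ?_
  rw [PowerSeries.coeff_rescale]
  simp only [Ey, EyQ, PowerSeries.coeff_mk]
  rw [← C_pow, ← mul_assoc, ← C_mul]

theorem r4 (q : K) (a : ℕ → K) :
    PowerSeries.rescale (C q) (Fser q a) = FQ q a := by
  refine PowerSeries.ext fun n => ?_
  rw [PowerSeries.coeff_rescale]
  simp only [Fser, FQ, PowerSeries.coeff_mk]
  rw [← C_pow]

theorem m1 (q : K) (c : ℕ → K) :
    PowerSeries.map (phi q) (Gser q c) = Gser q c := by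
  refine PowerSeries.ext fun n => ?_
  simp [PowerSeries.coeff_map, Gser, phi_C]

theorem m2 (q : K) : PowerSeries.map (phi q) (Ex q) = ExQ q := by
  refine PowerSeries.ext fun n => ?_
  simp only [PowerSeries.coeff_map, Ex, ExQ, PowerSeries.coeff_mk, map_mul, map_pow, phi_C,
    phi_X0, mul_pow]
  rw [← C_pow, ← mul_assoc, ← C_mul, mul_comm (qFact q n)⁻¹ (q ^ n), C_mul]

theorem m3 (q : K) : PowerSeries.map (phi q) (Ey q) = Ey q := by
  refine PowerSeries.ext fun n => ?_
  simp only [PowerSeries.coeff_map, Ey, PowerSeries.coeff_mk, map_mul, map_pow, phi_C, phi_X1]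

theorem m4 (q : K) (a : ℕ → K) :
    PowerSeries.map (phi q) (Fser q a) = Sser q a := by
  refine PowerSeries.ext fun n => ?_
  simp only [PowerSeries.coeff_map, Fser, Sser, PowerSeries.coeff_mk, map_mul, phi_C,
    substX_eq_phi]

theorem L1 {q : K} (hq : ∀ n : ℕ, 1 ≤ n → qInt q n ≠ 0) (a : ℕ → K) :
    Sser q a = Gser q a * ExQ q * Ey q := by
  rw [← m4, L0 hq, map_mul, map_mul, m1, m2, m3]

theorem L2 {q : K} (hq : ∀ n : ℕ, 1 ≤ n → qInt q n ≠ 0) (a : ℕ → K) :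
    FQ q a = GserQ q a * ExQ q * EyQ q := by
  rw [← r4, L0 hq, map_mul, map_mul, r1, r2, r3]

theorem T1 {q : K} (hq : ∀ n : ℕ, 1 ≤ n → qInt q n ≠ 0) (a : ℕ → K) :
    Gser q a - GserQ q a = PowerSeries.C (C (1 - q)) * Dser q a := by
  refine PowerSeries.ext fun n => ?_
  rw [map_sub, PowerSeries.coeff_C_mul]
  simp only [Gser, GserQ, Dser, PowerSeries.coeff_mk]
  cases n with
  | zero => simp
  | succ m =>
    rw [← C_sub, ← C_mul]
    congr 1
    simp only [Nat.succ_ne_zero, if_false, Nat.add_sub_cancel]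
    have hfm := qFact_ne_zero hq m
    have hI := hq (m + 1) (Nat.le_add_left 1 m)
    calc a (m + 1) / qFact q (m + 1) - q ^ (m + 1) * (a (m + 1) / qFact q (m + 1))
        = (1 - q ^ (m + 1)) * (a (m + 1) / qFact q (m + 1)) := by ring
      _ = (1 - q) * qInt q (m + 1) * (a (m + 1) / qFact q (m + 1)) := by
          rw [one_sub_mul_qInt]
      _ = (1 - q) * (a (m + 1) / qFact q m) := by
          rw [qFact_succ]; field_simp

theorem T2 {q : K} (hq : ∀ n : ℕ, 1 ≤ n → qInt q n ≠ 0) :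
    ExQ q - PowerSeries.rescale (C q) (ExQ q) =
      PowerSeries.C (C (1 - q)) *
        (PowerSeries.X * PowerSeries.C (C q * X 0) * ExQ q) := by
  refine PowerSeries.ext fun n => ?_
  rw [map_sub, PowerSeries.coeff_C_mul, PowerSeries.coeff_rescale]
  cases n with
  | zero => simp [ExQ]
  | succ m =>
    rw [mul_comm PowerSeries.X (PowerSeries.C (C q * X 0)), mul_assoc,
      PowerSeries.coeff_C_mul, PowerSeries.coeff_succ_X_mul]
    simp only [ExQ, PowerSeries.coeff_mk]
    rw [← C_pow]
    have hfm := qFact_ne_zero hq m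
    have hI := hq (m + 1) (Nat.le_add_left 1 m)
    have key : q ^ (m + 1) * (qFact q (m + 1))⁻¹ -
        q ^ (m + 1) * (q ^ (m + 1) * (qFact q (m + 1))⁻¹) =
        (1 - q) * (q * (q ^ m * (qFact q m)⁻¹)) := by
      calc q ^ (m + 1) * (qFact q (m + 1))⁻¹ -
            q ^ (m + 1) * (q ^ (m + 1) * (qFact q (m + 1))⁻¹)
          = (1 - q ^ (m + 1)) * (q ^ (m + 1) * (qFact q (m + 1))⁻¹) := by ring
        _ = (1 - q) * qInt q (m + 1) * (q ^ (m + 1) * (qFact q (m + 1))⁻¹) := by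
            rw [one_sub_mul_qInt]
        _ = (1 - q) * (q * (q ^ m * (qFact q m)⁻¹)) := by
            rw [qFact_succ, pow_succ]; field_simp
    trans (C (q ^ (m + 1) * (qFact q (m + 1))⁻¹ -
        q ^ (m + 1) * (q ^ (m + 1) * (qFact q (m + 1))⁻¹)) * X 0 ^ (m + 1))
    · rw [C_sub]; simp only [C_mul]; ring
    · rw [key]; simp only [C_mul]; ring

theorem T3 {q : K} (hq : ∀ n : ℕ, 1 ≤ n → qInt q n ≠ 0) :
    Ey q - EyQ q =
      PowerSeries.C (C (1 - q)) *
        (PowerSeries.X * PowerSeries.C (X 1) * EyQ q) := by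
  refine PowerSeries.ext fun n => ?_
  rw [map_sub, PowerSeries.coeff_C_mul]
  cases n with
  | zero => simp [Ey, EyQ]
  | succ m =>
    rw [mul_comm PowerSeries.X (PowerSeries.C (X 1 : MvPolynomial (Fin 2) K)), mul_assoc,
      PowerSeries.coeff_C_mul, PowerSeries.coeff_succ_X_mul]
    simp only [Ey, EyQ, PowerSeries.coeff_mk, Nat.add_sub_cancel]
    have hfm := qFact_ne_zero hq m
    have hI := hq (m + 1) (Nat.le_add_left 1 m)
    have key : q ^ ((m + 1) * m / 2) / qFact q (m + 1) -
        q ^ (m + 1) * (q ^ ((m + 1) * m / 2) / qFact q (m + 1)) =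
        (1 - q) * (q ^ m * (q ^ (m * (m - 1) / 2) / qFact q m)) := by
      calc q ^ ((m + 1) * m / 2) / qFact q (m + 1) -
            q ^ (m + 1) * (q ^ ((m + 1) * m / 2) / qFact q (m + 1))
          = (1 - q ^ (m + 1)) * (q ^ ((m + 1) * m / 2) / qFact q (m + 1)) := by ring
        _ = (1 - q) * qInt q (m + 1) * (q ^ ((m + 1) * m / 2) / qFact q (m + 1)) := by
            rw [one_sub_mul_qInt]
        _ = (1 - q) * (q ^ m * (q ^ (m * (m - 1) / 2) / qFact q m)) := by
            rw [tri_succ, pow_add, qFact_succ]; field_simp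
    trans (C (q ^ ((m + 1) * m / 2) / qFact q (m + 1) -
        q ^ (m + 1) * (q ^ ((m + 1) * m / 2) / qFact q (m + 1))) * X 1 ^ (m + 1))
    · rw [C_sub]; ring
    · rw [key]; simp only [C_mul]; ring

theorem mm1 (q : K) (a : ℕ → K) :
    PowerSeries.map (MvPolynomial.C : K →+* MvPolynomial (Fin 2) K)
      (PowerSeries.mk fun n => if n = 0 then (0 : K) else a n / qFact q (n - 1)) =
      Dser q a := by
  refine PowerSeries.ext fun n => ?_
  simp [PowerSeries.coeff_map, Dser, apply_ite (MvPolynomial.C : K →+* MvPolynomial (Fin 2) K)]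

theorem mm2 (q : K) (c : ℕ → K) :
    PowerSeries.map (MvPolynomial.C : K →+* MvPolynomial (Fin 2) K)
      (PowerSeries.mk fun n => c n / qFact q n) = Gser q c := by
  refine PowerSeries.ext fun n => ?_
  simp [PowerSeries.coeff_map, Gser]

theorem mm3 (q : K) (a : ℕ → K) :
    PowerSeries.map (MvPolynomial.C : K →+* MvPolynomial (Fin 2) K)
      (PowerSeries.mk fun n => a n * q ^ n / qFact q n) = GserQ q a := by
  refine PowerSeries.ext fun n => ?_
  simp only [PowerSeries.coeff_map, GserQ, PowerSeries.coeff_mk]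
  congr 1
  ring

theorem L3 {q : K} {a α : ℕ → K}
    (hα : PowerSeries.mk (fun n => if n = 0 then (0 : K) else a n / qFact q (n - 1)) =
      PowerSeries.mk (fun n => α n / qFact q n) *
        PowerSeries.mk (fun n => a n * q ^ n / qFact q n)) :
    Dser q a = Gser q α * GserQ q a := by
  have h := congrArg (PowerSeries.map (MvPolynomial.C : K →+* MvPolynomial (Fin 2) K)) hα
  rwa [map_mul, mm1, mm2, mm3] at h

theorem L4 {q : K} {a β : ℕ → K}
    (hβ : PowerSeries.mk (fun n => a n / qFact q n) =
      PowerSeries.mk (fun n => β n / qFact q n) *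
        PowerSeries.mk (fun n => a n * q ^ n / qFact q n)) :
    Gser q a = Gser q β * GserQ q a := by
  have h := congrArg (PowerSeries.map (MvPolynomial.C : K →+* MvPolynomial (Fin 2) K)) hβ
  rwa [map_mul, mm2, mm2, mm3] at h

theorem GserQ_ne_zero {q : K} (hq : ∀ n : ℕ, 1 ≤ n → qInt q n ≠ 0) {a : ℕ → K}
    (ha0 : a 0 ≠ 0) : GserQ q a ≠ 0 := by
  intro h0
  have := congrArg (PowerSeries.coeff 0) h0
  simp [GserQ, qFact_zero] at this
  exact ha0 this

theorem L5 {q : K} (hq : ∀ n : ℕ, 1 ≤ n → qInt q n ≠ 0) {a α β : ℕ → K} (ha0 : a 0 ≠ 0)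
    (hα : PowerSeries.mk (fun n => if n = 0 then (0 : K) else a n / qFact q (n - 1)) =
      PowerSeries.mk (fun n => α n / qFact q n) *
        PowerSeries.mk (fun n => a n * q ^ n / qFact q n))
    (hβ : PowerSeries.mk (fun n => a n / qFact q n) =
      PowerSeries.mk (fun n => β n / qFact q n) *
        PowerSeries.mk (fun n => a n * q ^ n / qFact q n)) :
    Gser q β = 1 + PowerSeries.C (C (1 - q)) * Gser q α := by
  have hA : (1 : PowerSeries (MvPolynomial (Fin 2) K)) * GserQ q a =
      (Gser q β - PowerSeries.C (C (1 - q)) * Gser q α) * GserQ q a := by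
    linear_combination - T1 hq a - PowerSeries.C (C (1 - q) : MvPolynomial (Fin 2) K) *
      L3 hα + L4 hβ
  have := mul_right_cancel₀ (GserQ_ne_zero hq ha0) hA
  linear_combination - this

theorem M {q : K} (hq : ∀ n : ℕ, 1 ≤ n → qInt q n ≠ 0) {a α β : ℕ → K} (ha0 : a 0 ≠ 0)
    (hα : PowerSeries.mk (fun n => if n = 0 then (0 : K) else a n / qFact q (n - 1)) =
      PowerSeries.mk (fun n => α n / qFact q n) *
        PowerSeries.mk (fun n => a n * q ^ n / qFact q n))
    (hβ : PowerSeries.mk (fun n => a n / qFact q n) =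
      PowerSeries.mk (fun n => β n / qFact q n) *
        PowerSeries.mk (fun n => a n * q ^ n / qFact q n)) :
    Sser q a - PowerSeries.rescale (C q) (Sser q a) =
      PowerSeries.C (C (1 - q)) * (Gser q α * FQ q a
        + PowerSeries.X * PowerSeries.C (X 1) * (Gser q β * FQ q a)
        + PowerSeries.X * PowerSeries.C (C q * X 0) * FQ q a) := by
  have h1 := L1 hq a
  have h2 : PowerSeries.rescale (C q) (Sser q a) =
      GserQ q a * PowerSeries.rescale (C q) (ExQ q) * EyQ q := by
    rw [h1, map_mul, map_mul, r1, r3]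
  have h3 := T1 hq a
  have h4 := T2 (q := q) hq
  have h5 := T3 (q := q) hq
  have h6 := L3 hα
  have h7 := L2 hq a
  have h8 := L5 hq ha0 hα hβ
  set c : PowerSeries (MvPolynomial (Fin 2) K) := PowerSeries.C (C (1 - q)) with hc
  set XY : PowerSeries (MvPolynomial (Fin 2) K) :=
    PowerSeries.X * PowerSeries.C (X 1) with hXY
  set XQ : PowerSeries (MvPolynomial (Fin 2) K) :=
    PowerSeries.X * PowerSeries.C (C q * X 0) with hXQ
  linear_combination h1 - h2 + (ExQ q * Ey q) * h3 + (GserQ q a * EyQ q) * h4 +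
    (GserQ q a * ExQ q + c * Gser q α * GserQ q a * ExQ q) * h5 +
    (c * ExQ q * Ey q) * h6 -
    (c * Gser q α + c * c * Gser q α * XY + c * XQ + c * XY) * h7 -
    (c * XY * FQ q a) * h8

theorem Cmerge (u v w : K) (P : MvPolynomial (Fin 2) K) :
    C u * (C v * (C w * P)) = C (u * v * w) * P := by
  rw [C_mul, C_mul]; ring

theorem alpha0 {q : K} {a α : ℕ → K} (ha0 : a 0 ≠ 0)
    (hα : PowerSeries.mk (fun n => if n = 0 then (0 : K) else a n / qFact q (n - 1)) =
      PowerSeries.mk (fun n => α n / qFact q n) *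
        PowerSeries.mk (fun n => a n * q ^ n / qFact q n)) :
    α 0 = 0 := by
  have h0 := congrArg (PowerSeries.coeff 0) hα
  simp [PowerSeries.coeff_mul, qFact_zero, Finset.Nat.antidiagonal_zero] at h0
  rcases h0.symm with h | h
  · exact absurd h ha0
  · exact h

theorem E (q : K) (c a : ℕ → K) (N : ℕ) :
    PowerSeries.coeff N (Gser q c * FQ q a) =
      ∑ i ∈ Finset.range (N + 1),
        C (c i / qFact q i) *
          (C (q ^ (N - i)) * (C (qFact q (N - i))⁻¹ * appell q a (N - i))) := by
  rw [PowerSeries.coeff_mul, Finset.Nat.sum_antidiagonal_eq_sum_range_succ_mk]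
  simp only [Gser, FQ, PowerSeries.coeff_mk]

theorem lemA {q : K} (hq : ∀ n : ℕ, 1 ≤ n → qInt q n ≠ 0) (a α β : ℕ → K)
    (ha0 : α 0 = 0) (m : ℕ) :
    PowerSeries.coeff (m + 1) (Gser q α * FQ q a) +
      X 1 * PowerSeries.coeff m (Gser q β * FQ q a) +
      C q * X 0 * PowerSeries.coeff m (FQ q a) =
    C (q ^ (m + 1) / qFact q m) * (X 0 * appell q a m) +
      C (q ^ m * α 1 / qFact q m) * appell q a m +
      C (q ^ m * β 0 / qFact q m) * (X 1 * appell q a m) +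
      (∑ j ∈ Finset.range m,
        C (α (m + 1 - j) * q ^ j / (qFact q (m + 1 - j) * qFact q j)) * appell q a j) +
      X 1 * ∑ j ∈ Finset.range m,
        C (β (m - j) * q ^ j / (qFact q (m - j) * qFact q j)) * appell q a j := by
  rw [E, E]
  have hFQ : PowerSeries.coeff m (FQ q a) =
      C (q ^ m) * (C (qFact q m)⁻¹ * appell q a m) := by
    simp only [FQ, PowerSeries.coeff_mk]
  rw [hFQ]
  have hA : (∑ i ∈ Finset.range (m + 1 + 1),
      C (α i / qFact q i) *
        (C (q ^ (m + 1 - i)) * (C (qFact q (m + 1 - i))⁻¹ * appell q a (m + 1 - i)))) =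
      (∑ j ∈ Finset.range m,
        C (α (m + 1 - j) * q ^ j / (qFact q (m + 1 - j) * qFact q j)) * appell q a j) +
      C (q ^ m * α 1 / qFact q m) * appell q a m := by
    rw [Finset.sum_range_succ', Finset.sum_range_succ', ha0]
    simp only [zero_div, map_zero, zero_mul, add_zero, Nat.zero_add, Nat.add_sub_cancel]
    congr 1
    · conv_rhs => rw [← Finset.sum_range_reflect]
      refine Finset.sum_congr rfl fun i hi => ?_
      have him : i < m := Finset.mem_range.mp hi
      rw [show m + 1 - (m - 1 - i) = i + 1 + 1 from by omega,
        show m + 1 - (i + 1 + 1) = m - 1 - i from by omega, Cmerge]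
      congr 1
      ring
    · rw [Cmerge, qFact_one]
      congr 1
      ring
  have hB : (∑ i ∈ Finset.range (m + 1),
      C (β i / qFact q i) *
        (C (q ^ (m - i)) * (C (qFact q (m - i))⁻¹ * appell q a (m - i)))) =
      (∑ j ∈ Finset.range m,
        C (β (m - j) * q ^ j / (qFact q (m - j) * qFact q j)) * appell q a j) +
      C (q ^ m * β 0 / qFact q m) * appell q a m := by
    rw [Finset.sum_range_succ']
    simp only [Nat.sub_zero]
    refine congrArg₂ (· + ·) ?_ ?_
    · conv_rhs => rw [← Finset.sum_range_reflect]
      refine Finset.sum_congr rfl fun i hi => ?_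
      have him : i < m := Finset.mem_range.mp hi
      rw [show m - (m - 1 - i) = i + 1 from by omega,
        show m - (i + 1) = m - 1 - i from by omega, Cmerge]
      congr 1
      ring
    · rw [Cmerge, qFact_zero]
      congr 1
      ring
  rw [hA, hB]
  have hCq : (C q : MvPolynomial (Fin 2) K) * X 0 * (C (q ^ m) * (C (qFact q m)⁻¹ *
      appell q a m)) = C (q ^ (m + 1) / qFact q m) * (X 0 * appell q a m) := by
    have : (C q : MvPolynomial (Fin 2) K) * (C (q ^ m) * C (qFact q m)⁻¹) =
        C (q ^ (m + 1) / qFact q m) := by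
      rw [← C_mul, ← C_mul]
      congr 1
      rw [pow_succ]
      ring
    calc (C q : MvPolynomial (Fin 2) K) * X 0 * (C (q ^ m) * (C (qFact q m)⁻¹ *
          appell q a m)) = C q * (C (q ^ m) * C (qFact q m)⁻¹) * (X 0 * appell q a m) := by
            ring
      _ = _ := by rw [this]
  rw [hCq]
  ring

theorem lemB {q : K} (hq0 : q ≠ 0) (hq : ∀ n : ℕ, 1 ≤ n → qInt q n ≠ 0)
    (a α β : ℕ → K) (m : ℕ) :
    C (qInt q (m + 1) / qFact q (m + 1)) *
      (C (q ^ (m + 1)) * (X 0 + C q⁻¹ * (C (α 1) + C (β 0) * X 1)) * appell q a m +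
        C (qInt q (m + 1))⁻¹ *
          ∑ k ∈ Finset.Icc 1 m, C (qChoose q (m + 1) (k - 1) * q ^ (k - 1)) *
            (C (α (m + 1 - k + 1)) + C (qInt q (m + 1 - k + 1) * β (m + 1 - k)) * X 1) *
              appell q a (k - 1)) =
    C (q ^ (m + 1) / qFact q m) * (X 0 * appell q a m) +
      C (q ^ m * α 1 / qFact q m) * appell q a m +
      C (q ^ m * β 0 / qFact q m) * (X 1 * appell q a m) +
      (∑ j ∈ Finset.range m,
        C (α (m + 1 - j) * q ^ j / (qFact q (m + 1 - j) * qFact q j)) * appell q a j) +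
      X 1 * ∑ j ∈ Finset.range m,
        C (β (m - j) * q ^ j / (qFact q (m - j) * qFact q j)) * appell q a j := by
  have hfm := qFact_ne_zero hq m
  have hfn := qFact_ne_zero hq (m + 1)
  have hI := hq (m + 1) (Nat.le_add_left 1 m)
  have hA1 : C (qInt q (m + 1) / qFact q (m + 1)) *
      (C (q ^ (m + 1)) * (X 0 + C q⁻¹ * (C (α 1) + C (β 0) * X 1)) * appell q a m) =
      C (q ^ (m + 1) / qFact q m) * (X 0 * appell q a m) +
        C (q ^ m * α 1 / qFact q m) * appell q a m +
        C (q ^ m * β 0 / qFact q m) * (X 1 * appell q a m) := by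
    have e1 : (C (qInt q (m + 1) / qFact q (m + 1)) : MvPolynomial (Fin 2) K) *
        C (q ^ (m + 1)) = C (q ^ (m + 1) / qFact q m) := by
      rw [← C_mul]
      congr 1
      rw [qFact_succ]
      field_simp
    have e2 : (C (q ^ (m + 1) / qFact q m) : MvPolynomial (Fin 2) K) *
        (C q⁻¹ * C (α 1)) = C (q ^ m * α 1 / qFact q m) := by
      rw [← C_mul, ← C_mul]
      congr 1
      rw [pow_succ]
      field_simp
    have e3 : (C (q ^ (m + 1) / qFact q m) : MvPolynomial (Fin 2) K) *
        (C q⁻¹ * C (β 0)) = C (q ^ m * β 0 / qFact q m) := by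
      rw [← C_mul, ← C_mul]
      congr 1
      rw [pow_succ]
      field_simp
    linear_combination ((X 0 + C q⁻¹ * (C (α 1) + C (β 0) * X 1)) * appell q a m) * e1 +
      appell q a m * e2 + (X 1 * appell q a m) * e3
  have hA2 : C (qInt q (m + 1) / qFact q (m + 1)) *
      (C (qInt q (m + 1))⁻¹ *
        ∑ k ∈ Finset.Icc 1 m, C (qChoose q (m + 1) (k - 1) * q ^ (k - 1)) *
          (C (α (m + 1 - k + 1)) + C (qInt q (m + 1 - k + 1) * β (m + 1 - k)) * X 1) *
            appell q a (k - 1)) =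
      (∑ j ∈ Finset.range m,
        C (α (m + 1 - j) * q ^ j / (qFact q (m + 1 - j) * qFact q j)) * appell q a j) +
      X 1 * ∑ j ∈ Finset.range m,
        C (β (m - j) * q ^ j / (qFact q (m - j) * qFact q j)) * appell q a j := by
    rw [show Finset.Icc 1 m = Finset.Ico 1 (m + 1) from by rw [Finset.Ico_add_one_right_eq_Icc],
      Finset.sum_Ico_eq_sum_range]
    simp only [Nat.add_sub_cancel, Nat.add_sub_cancel_left]
    rw [← mul_assoc, ← C_mul, Finset.mul_sum, Finset.mul_sum, ← Finset.sum_add_distrib]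
    refine Finset.sum_congr rfl fun i hi => ?_
    have him : i < m := Finset.mem_range.mp hi
    rw [show m + 1 - (1 + i) + 1 = m + 1 - i from by omega,
      show m + 1 - (1 + i) = m - i from by omega]
    have hfi := qFact_ne_zero hq i
    have hfmi := qFact_ne_zero hq (m - i)
    have hImi := hq (m + 1 - i) (by omega)
    have hfm1i : qFact q (m + 1 - i) = qFact q (m - i) * qInt q (m + 1 - i) := by
      rw [show m + 1 - i = (m - i) + 1 from by omega, qFact_succ,
        show m - i + 1 = m + 1 - i from by omega]
    have hfm1i' : qFact q (m + 1 - i) ≠ 0 := by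
      rw [hfm1i]; exact mul_ne_zero hfmi hImi
    have e4 : (C (qInt q (m + 1) / qFact q (m + 1) * (qInt q (m + 1))⁻¹) :
        MvPolynomial (Fin 2) K) * C (qChoose q (m + 1) i * q ^ i) * C (α (m + 1 - i)) =
        C (α (m + 1 - i) * q ^ i / (qFact q (m + 1 - i) * qFact q i)) := by
      rw [← C_mul, ← C_mul]
      congr 1
      rw [qChoose]
      field_simp
    have e5 : (C (qInt q (m + 1) / qFact q (m + 1) * (qInt q (m + 1))⁻¹) :
        MvPolynomial (Fin 2) K) * C (qChoose q (m + 1) i * q ^ i) *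
          C (qInt q (m + 1 - i) * β (m - i)) =
        C (β (m - i) * q ^ i / (qFact q (m - i) * qFact q i)) := by
      rw [← C_mul, ← C_mul]
      congr 1
      rw [qChoose, hfm1i]
      field_simp
    linear_combination appell q a i * e4 + (X 1 * appell q a i) * e5
  rw [mul_add, hA1, hA2]
  ring

end AppellRec

/-- Equivalent form of the recurrence relation for 2D `q`-Appell polynomials. -/
theorem appell_recurrence'
    {K : Type*} [Field K] [CharZero K] (q : K) (hq0 : q ≠ 0) (hq1 : q ≠ 1)
    (hq : ∀ n : ℕ, 1 ≤ n → qInt q n ≠ 0)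
    (a : ℕ → K) (ha0 : a 0 ≠ 0)
    (α β : ℕ → K)
    (hα : PowerSeries.mk (fun n => if n = 0 then (0 : K) else a n / qFact q (n - 1)) =
      PowerSeries.mk (fun n => α n / qFact q n) *
        PowerSeries.mk (fun n => a n * q ^ n / qFact q n))
    (hβ : PowerSeries.mk (fun n => a n / qFact q n) =
      PowerSeries.mk (fun n => β n / qFact q n) *
        PowerSeries.mk (fun n => a n * q ^ n / qFact q n))
    (n : ℕ) (hn : 1 ≤ n) :
    substX q (appell q a n) =
      C (q ^ n) * (X 0 + C q⁻¹ * (C (α 1) + C (β 0) * X 1)) * appell q a (n - 1) +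
      C (qInt q n)⁻¹ *
        ∑ k ∈ Finset.Icc 1 (n - 1), C (qChoose q n (k - 1) * q ^ (k - 1)) *
          (C (α (n - k + 1)) + C (qInt q (n - k + 1) * β (n - k)) * X 1) *
            appell q a (k - 1) := by
  rcases n with _ | m
  · exact absurd hn (by omega)
  simp only [Nat.add_sub_cancel]
  have hM := congrArg (PowerSeries.coeff (m + 1))
    (AppellRec.M hq ha0 hα hβ)
  rw [map_sub, PowerSeries.coeff_rescale] at hM
  simp only [AppellRec.Sser, PowerSeries.coeff_mk] at hM
  rw [PowerSeries.coeff_C_mul, map_add, map_add,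
    mul_comm PowerSeries.X (PowerSeries.C (X 1 : MvPolynomial (Fin 2) K)),
    mul_assoc (PowerSeries.C (X 1 : MvPolynomial (Fin 2) K)),
    PowerSeries.coeff_C_mul, PowerSeries.coeff_succ_X_mul,
    mul_comm PowerSeries.X (PowerSeries.C (C q * X 0 : MvPolynomial (Fin 2) K)),
    mul_assoc (PowerSeries.C (C q * X 0 : MvPolynomial (Fin 2) K)),
    PowerSeries.coeff_C_mul, PowerSeries.coeff_succ_X_mul] at hM
  have hL : C (qFact q (m + 1))⁻¹ * substX q (appell q a (m + 1)) -
      C q ^ (m + 1) * (C (qFact q (m + 1))⁻¹ * substX q (appell q a (m + 1))) =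
      C (1 - q) * (C (qInt q (m + 1) / qFact q (m + 1)) * substX q (appell q a (m + 1))) := by
    have s0 : (qFact q (m + 1))⁻¹ - q ^ (m + 1) * (qFact q (m + 1))⁻¹ =
        (1 - q) * (qInt q (m + 1) / qFact q (m + 1)) := by
      calc (qFact q (m + 1))⁻¹ - q ^ (m + 1) * (qFact q (m + 1))⁻¹
          = (1 - q ^ (m + 1)) * (qFact q (m + 1))⁻¹ := by ring
        _ = (1 - q) * qInt q (m + 1) * (qFact q (m + 1))⁻¹ := by
            rw [AppellRec.one_sub_mul_qInt]
        _ = (1 - q) * (qInt q (m + 1) / qFact q (m + 1)) := by ring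
    calc C (qFact q (m + 1))⁻¹ * substX q (appell q a (m + 1)) -
          C q ^ (m + 1) * (C (qFact q (m + 1))⁻¹ * substX q (appell q a (m + 1)))
        = C ((qFact q (m + 1))⁻¹ - q ^ (m + 1) * (qFact q (m + 1))⁻¹) *
            substX q (appell q a (m + 1)) := by
          rw [C_sub, C_mul, ← C_pow]; ring
      _ = C ((1 - q) * (qInt q (m + 1) / qFact q (m + 1))) *
            substX q (appell q a (m + 1)) := by rw [s0]
      _ = C (1 - q) * (C (qInt q (m + 1) / qFact q (m + 1)) *
            substX q (appell q a (m + 1))) := by rw [C_mul, mul_assoc]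
  rw [hL] at hM
  have hC1q : (C (1 - q) : MvPolynomial (Fin 2) K) ≠ 0 := by
    intro h0
    rw [← C_0] at h0
    exact sub_ne_zero.mpr (Ne.symm hq1) (MvPolynomial.C_injective _ _ h0)
  have key := mul_left_cancel₀ hC1q hM
  have hA := AppellRec.lemA hq a α β (AppellRec.alpha0 ha0 hα) m
  have hB := AppellRec.lemB hq0 hq a α β m
  have hCn : (C (qInt q (m + 1) / qFact q (m + 1)) : MvPolynomial (Fin 2) K) ≠ 0 := by
    intro h0
    rw [← C_0] at h0
    exact div_ne_zero (hq (m + 1) (Nat.le_add_left 1 m)) (AppellRec.qFact_ne_zero hq (m + 1))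
      (MvPolynomial.C_injective _ _ h0)
  refine mul_left_cancel₀ hCn ?_
  exact key.trans (hA.trans hB.symm)
end
end

section
/- (Partial q-difference equation in x for 2D q-Bernoulli polynomials.) For every n ≥ 1: Σ_{k=1}^{n} (q^{n−k}/[k]_q!) (α_k^B + [k]_q β_{k−1}^B y) D_{q,x}^{k} B_{n,q}(x,y) + q^{n} x · D_{q,x} B_{n,q}(x,y) − [n]_q · B_{n,q}(qx,y) = 0, where B_{n,q}(qx,y) denotes the polynomial obtained from B_{n,q}(x,y) by substituting qx for x. -/
noncomputable section

open Finset MvPolynomial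

namespace QAux


variable {K : Type*} [Field K]

lemma qInt_zero (q : K) : qInt q 0 = 0 := by simp [qInt]

lemma qInt_one (q : K) : qInt q 1 = 1 := by simp [qInt]

lemma qFact_zero (q : K) : qFact q 0 = 1 := by simp [qFact]

lemma qFact_one (q : K) : qFact q 1 = 1 := by simp [qFact, qInt]

lemma qFact_succ (q : K) (n : ℕ) : qFact q (n + 1) = qFact q n * qInt q (n + 1) :=
  Finset.prod_range_succ _ _

lemma qFact_ne_zero {q : K} (hq : ∀ n : ℕ, 1 ≤ n → qInt q n ≠ 0) (n : ℕ) : qFact q n ≠ 0 := by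
  induction n with
  | zero => simp [qFact_zero]
  | succ m ih => rw [qFact_succ]; exact mul_ne_zero ih (hq (m + 1) (by omega))

lemma qInt_eq {q : K} (hq1 : q ≠ 1) (n : ℕ) : qInt q n = (q ^ n - 1) / (q - 1) := by
  rw [qInt, eq_div_iff (sub_ne_zero.mpr hq1)]
  exact geom_sum_mul q n

lemma geom (q : K) (n : ℕ) : qInt q n * (q - 1) = q ^ n - 1 := geom_sum_mul q n

variable {q : K}

lemma qChoose_zero (hq : ∀ n : ℕ, 1 ≤ n → qInt q n ≠ 0) (n : ℕ) : qChoose q n 0 = 1 := by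
  rw [qChoose, qFact_zero, one_mul, Nat.sub_zero, div_self (qFact_ne_zero hq n)]

lemma qChoose_self (hq : ∀ n : ℕ, 1 ≤ n → qInt q n ≠ 0) (n : ℕ) : qChoose q n n = 1 := by
  rw [qChoose, Nat.sub_self, qFact_zero, mul_one, div_self (qFact_ne_zero hq n)]

lemma qChoose_symm (n j : ℕ) (h : j ≤ n) : qChoose q n j = qChoose q n (n - j) := by
  rw [qChoose, qChoose, show n - (n - j) = j by omega, mul_comm]

lemma qChoose_one (hq : ∀ n : ℕ, 1 ≤ n → qInt q n ≠ 0) (n : ℕ) (h : 1 ≤ n) :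
    qChoose q n 1 = qInt q n := by
  obtain ⟨m, rfl⟩ : ∃ m, n = m + 1 := ⟨n - 1, by omega⟩
  rw [qChoose, qFact_one, one_mul, Nat.add_sub_cancel, qFact_succ,
    mul_comm (qFact q m), mul_div_assoc, div_self (qFact_ne_zero hq m), mul_one]

lemma qChoose_sub_one (hq : ∀ n : ℕ, 1 ≤ n → qInt q n ≠ 0) (n : ℕ) (h : 1 ≤ n) :
    qChoose q n (n - 1) = qInt q n := by
  rw [qChoose_symm n (n - 1) (by omega), show n - (n - 1) = 1 by omega, qChoose_one hq n h]

lemma qChoose_mul (hq : ∀ n : ℕ, 1 ≤ n → qInt q n ≠ 0) (l r N : ℕ) (hlr : l ≤ r) (hrN : r ≤ N) :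
    qChoose q N r * qChoose q r l = qChoose q N l * qChoose q (N - l) (r - l) := by
  have h := qFact_ne_zero hq (K := K) (q := q)
  rw [qChoose, qChoose, qChoose, qChoose, show N - l - (r - l) = N - r by omega,
    div_mul_div_comm, div_mul_div_comm,
    div_eq_div_iff (mul_ne_zero (mul_ne_zero (h r) (h (N - r))) (mul_ne_zero (h l) (h (r - l))))
      (mul_ne_zero (mul_ne_zero (h l) (h (N - l))) (mul_ne_zero (h (r - l)) (h (N - r))))]
  ring

lemma qInt_qChoose (hq : ∀ n : ℕ, 1 ≤ n → qInt q n ≠ 0) (i M : ℕ) (h : i < M) :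
    qInt q (M - i) * qChoose q M i = qInt q M * qChoose q (M - 1) i := by
  have hf := qFact_ne_zero hq (K := K) (q := q)
  obtain ⟨m, rfl⟩ : ∃ m, M = m + 1 := ⟨M - 1, by omega⟩
  rw [Nat.add_sub_cancel, qChoose, qChoose, show m + 1 - i = (m - i) + 1 by omega,
    mul_div_assoc', mul_div_assoc',
    div_eq_div_iff (mul_ne_zero (hf i) (hf (m - i + 1))) (mul_ne_zero (hf i) (hf (m - i))),
    qFact_succ q (m - i), qFact_succ q m]
  rw [show m - i + 1 = m + 1 - i by omega]
  ring

def qS (q : K) (b : ℕ → K) (r : ℕ) : K := ∑ j ∈ Finset.range (r + 1), qChoose q r j * b j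

def qU (q : K) (b : ℕ → K) (M : ℕ) : K := ∑ i ∈ Finset.range (M + 1), q ^ i * qChoose q M i * b i

def qT (q : K) (b : ℕ → K) (N : ℕ) : K :=
  ∑ r ∈ Finset.range (N + 1), q ^ (N - r) * qChoose q N r * qS q b r * b (N - r)

def qT' (q : K) (b : ℕ → K) (N : ℕ) : K :=
  ∑ l ∈ Finset.range (N + 1), qChoose q N l * b l * qU q b (N - l)

def qP (q : K) (b : ℕ → K) (N : ℕ) : K :=
  ∑ j ∈ Finset.range (N + 1), q ^ j * qChoose q N j * b j * b (N - j)

lemma tri (f : ℕ → ℕ → K) (N : ℕ) :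
    ∑ r ∈ Finset.range (N + 1), ∑ l ∈ Finset.range (r + 1), f r l =
      ∑ l ∈ Finset.range (N + 1), ∑ d ∈ Finset.range (N + 1 - l), f (l + d) l := by
  induction N with
  | zero => simp
  | succ n ih =>
    rw [Finset.sum_range_succ, ih]
    conv_rhs => rw [Finset.sum_range_succ]
    rw [show n + 1 + 1 - (n + 1) = 1 by omega, Finset.sum_range_one,
      Finset.sum_range_succ (f := fun l => f (n + 1) l)]
    have h1 : ∀ l ∈ Finset.range (n + 1),
        (∑ d ∈ Finset.range (n + 1 + 1 - l), f (l + d) l) =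
        (∑ d ∈ Finset.range (n + 1 - l), f (l + d) l) + f (n + 1) l := by
      intro l hl
      rw [Finset.mem_range] at hl
      rw [show n + 1 + 1 - l = (n + 1 - l) + 1 by omega, Finset.sum_range_succ,
        show l + (n + 1 - l) = n + 1 by omega]
    rw [Finset.sum_congr rfl h1, Finset.sum_add_distrib]
    ring

lemma hS {q : K} (hq : ∀ n : ℕ, 1 ≤ n → qInt q n ≠ 0) {b : ℕ → K} (hb0 : b 0 = 1)
    (hb : ∀ n : ℕ, 2 ≤ n → ∑ k ∈ Finset.range n, qChoose q n k * b k = 0) (M : ℕ) :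
    qS q b M = b M + (if M = 1 then 1 else 0) := by
  match M with
  | 0 => simp [qS, qChoose_self hq 0, hb0]
  | 1 =>
    rw [qS, Finset.sum_range_succ, Finset.sum_range_one, qChoose_zero hq 1,
      qChoose_self hq 1, hb0]
    simp [add_comm]
  | (m + 2) =>
    rw [qS, Finset.sum_range_succ, hb (m + 2) (by omega), qChoose_self hq (m + 2)]
    simp

lemma hU {q : K} (hq : ∀ n : ℕ, 1 ≤ n → qInt q n ≠ 0) (b : ℕ → K) (M : ℕ) (hM : 1 ≤ M) :
    qU q b M = q ^ M * qS q b M - (q - 1) * qInt q M * qU q b (M - 1) := by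
  obtain ⟨m, rfl⟩ : ∃ m, M = m + 1 := ⟨M - 1, by omega⟩
  have key : ∀ i ∈ Finset.range (m + 1),
      q ^ i * qChoose q (m + 1) i * b i =
      q ^ (m + 1) * (qChoose q (m + 1) i * b i) -
        (q - 1) * qInt q (m + 1) * (q ^ i * qChoose q m i * b i) := by
    intro i hi
    rw [Finset.mem_range] at hi
    have h1 := qInt_qChoose hq i (m + 1) (by omega)
    have h2 := geom q (m + 1 - i)
    have h3 : q ^ i * q ^ (m + 1 - i) = q ^ (m + 1) := by rw [← pow_add]; congr 1; omega
    rw [show m + 1 - 1 = m by omega] at h1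
    linear_combination (-(q - 1)) * q ^ i * b i * h1 + qChoose q (m + 1) i * b i * q ^ i * h2 +
      qChoose q (m + 1) i * b i * h3
  have e1 : qU q b (m + 1) =
      (∑ i ∈ Finset.range (m + 1), q ^ i * qChoose q (m + 1) i * b i) +
        q ^ (m + 1) * 1 * b (m + 1) := by
    rw [qU, Finset.sum_range_succ, qChoose_self hq]
  have e2 : qS q b (m + 1) =
      (∑ i ∈ Finset.range (m + 1), qChoose q (m + 1) i * b i) + 1 * b (m + 1) := by
    rw [qS, Finset.sum_range_succ, qChoose_self hq]
  have e3 : ∑ i ∈ Finset.range (m + 1), q ^ i * qChoose q (m + 1) i * b i =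
      q ^ (m + 1) * (∑ i ∈ Finset.range (m + 1), qChoose q (m + 1) i * b i) -
        (q - 1) * qInt q (m + 1) * qU q b m := by
    rw [qU, Finset.mul_sum, Finset.mul_sum, ← Finset.sum_sub_distrib]
    exact Finset.sum_congr rfl key
  rw [e1, e2, e3, Nat.add_sub_cancel]
  ring

lemma qS_zero {q : K} (hq : ∀ n : ℕ, 1 ≤ n → qInt q n ≠ 0) {b : ℕ → K} (hb0 : b 0 = 1) :
    qS q b 0 = 1 := by
  simp [qS, qChoose_self hq 0, hb0]

lemma qU_zero {q : K} (hq : ∀ n : ℕ, 1 ≤ n → qInt q n ≠ 0) {b : ℕ → K} (hb0 : b 0 = 1) :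
    qU q b 0 = 1 := by
  simp [qU, qChoose_self hq 0, hb0]

lemma TT' {q : K} (hq : ∀ n : ℕ, 1 ≤ n → qInt q n ≠ 0) (b : ℕ → K) (N : ℕ) :
    qT q b N = qT' q b N := by
  rw [qT, qT']
  have e1 : ∀ r ∈ Finset.range (N + 1),
      q ^ (N - r) * qChoose q N r * qS q b r * b (N - r) =
      ∑ l ∈ Finset.range (r + 1),
        q ^ (N - r) * qChoose q N r * qChoose q r l * b l * b (N - r) := by
    intro r _
    rw [qS, Finset.mul_sum, Finset.sum_mul]
    exact Finset.sum_congr rfl fun l _ => by ring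
  rw [Finset.sum_congr rfl e1,
    tri (fun r l => q ^ (N - r) * qChoose q N r * qChoose q r l * b l * b (N - r)) N]
  apply Finset.sum_congr rfl
  intro l hl
  rw [Finset.mem_range] at hl
  rw [qU, Finset.mul_sum, show N + 1 - l = (N - l) + 1 by omega,
    ← Finset.sum_range_reflect (fun i => qChoose q N l * b l * (q ^ i * qChoose q (N - l) i * b i))
      ((N - l) + 1)]
  apply Finset.sum_congr rfl
  intro d hd
  rw [Finset.mem_range] at hd
  have hdl : d ≤ N - l := by omega
  have hcm := qChoose_mul hq l (l + d) N (by omega) (by omega)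
  rw [Nat.add_sub_cancel_left] at hcm
  have hsym := qChoose_symm (N - l) d hdl (q := q)
  rw [show N - l + 1 - 1 - d = N - l - d by omega, show N - (l + d) = N - l - d by omega]
  linear_combination q ^ (N - l - d) * b l * b (N - l - d) * hcm +
    qChoose q N l * b l * q ^ (N - l - d) * b (N - l - d) * hsym

lemma LA {q : K} (hq : ∀ n : ℕ, 1 ≤ n → qInt q n ≠ 0) {b : ℕ → K} (hb0 : b 0 = 1)
    (hb : ∀ n : ℕ, 2 ≤ n → ∑ k ∈ Finset.range n, qChoose q n k * b k = 0)
    (N : ℕ) (hN : 1 ≤ N) :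
    qT q b N = qP q b N + qInt q N * q ^ (N - 1) * b (N - 1) := by
  rw [qT]
  have e1 : ∀ r ∈ Finset.range (N + 1),
      q ^ (N - r) * qChoose q N r * qS q b r * b (N - r) =
      q ^ (N - r) * qChoose q N r * b r * b (N - r) +
        (if r = 1 then qInt q N * q ^ (N - 1) * b (N - 1) else 0) := by
    intro r _
    rw [hS hq hb0 hb r]
    by_cases h1 : r = 1
    · subst h1
      rw [if_pos rfl, if_pos rfl, qChoose_one hq N hN]
      ring
    · rw [if_neg h1, if_neg h1]
      ring
  rw [Finset.sum_congr rfl e1, Finset.sum_add_distrib, Finset.sum_ite_eq' (Finset.range (N + 1)) 1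
    (fun _ => qInt q N * q ^ (N - 1) * b (N - 1)), if_pos (by simp; omega)]
  congr 1
  rw [qP, ← Finset.sum_range_reflect (fun j => q ^ j * qChoose q N j * b j * b (N - j)) (N + 1)]
  apply Finset.sum_congr rfl
  intro r hr
  rw [Finset.mem_range] at hr
  rw [show N + 1 - 1 - r = N - r by omega, show N - (N - r) = r by omega,
    ← qChoose_symm N r (by omega)]
  ring

lemma LB {q : K} (hq : ∀ n : ℕ, 1 ≤ n → qInt q n ≠ 0) (hq1 : q ≠ 1) {b : ℕ → K} (hb0 : b 0 = 1)
    (hb : ∀ n : ℕ, 2 ≤ n → ∑ k ∈ Finset.range n, qChoose q n k * b k = 0)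
    (N : ℕ) (hN : 1 ≤ N) :
    qT' q b N = qP q b N + q * qInt q N * b (N - 1) - (q - 1) * qInt q N * qT' q b (N - 1) := by
  rw [qT', Finset.sum_range_succ, qChoose_self hq N, Nat.sub_self, qU_zero hq hb0]
  have e1 : ∀ l ∈ Finset.range N,
      qChoose q N l * b l * qU q b (N - l) =
      q ^ (N - l) * qChoose q N l * b l * b (N - l) +
        (if l = N - 1 then q * qInt q N * b (N - 1) else 0) -
        (q - 1) * qInt q N * (qChoose q (N - 1) l * b l * qU q b (N - 1 - l)) := by
    intro l hl
    rw [Finset.mem_range] at hl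
    rw [hU hq b (N - l) (by omega), hS hq hb0 hb (N - l),
      show N - l - 1 = N - 1 - l by omega]
    have h1 := qInt_qChoose hq l N (by omega)
    rw [show N - 1 = N - 1 by rfl] at h1
    by_cases h2 : l = N - 1
    · subst h2
      rw [if_pos rfl, if_pos (by omega), show N - (N - 1) = 1 by omega,
        show N - 1 - (N - 1) = 0 by omega, qU_zero hq hb0, qInt_one,
        qChoose_sub_one hq N hN, qChoose_self hq (N - 1), pow_one]
      ring
    · rw [if_neg (by omega), if_neg h2]
      linear_combination (1 - q) * b l * qU q b (N - 1 - l) * h1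
  rw [Finset.sum_congr rfl e1, Finset.sum_sub_distrib, Finset.sum_add_distrib,
    Finset.sum_ite_eq' (Finset.range N) (N - 1) (fun _ => q * qInt q N * b (N - 1)),
    if_pos (by simp; omega)]
  have e2 : ∑ l ∈ Finset.range N, (q - 1) * qInt q N * (qChoose q (N - 1) l * b l * qU q b (N - 1 - l)) =
      (q - 1) * qInt q N * qT' q b (N - 1) := by
    rw [qT', show N - 1 + 1 = N by omega, Finset.mul_sum]
  rw [e2]
  have e3 : ∑ l ∈ Finset.range N, q ^ (N - l) * qChoose q N l * b l * b (N - l) =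
      qP q b N - b N := by
    rw [qP, Finset.sum_range_succ', pow_zero, qChoose_zero hq, Nat.sub_zero, hb0,
      ← Finset.sum_range_reflect
        (fun i => q ^ (i + 1) * qChoose q N (i + 1) * b (i + 1) * b (N - (i + 1))) N]
    have e4 : ∀ l ∈ Finset.range N,
        q ^ (N - l) * qChoose q N l * b l * b (N - l) =
        q ^ (N - 1 - l + 1) * qChoose q N (N - 1 - l + 1) * b (N - 1 - l + 1) *
          b (N - (N - 1 - l + 1)) := by
      intro l hl
      rw [Finset.mem_range] at hl
      rw [show N - 1 - l + 1 = N - l by omega, show N - (N - l) = l by omega,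
        ← qChoose_symm N l (by omega)]
      ring
    rw [Finset.sum_congr rfl e4]
    ring
  rw [e3]
  ring

lemma LT {q : K} (hq : ∀ n : ℕ, 1 ≤ n → qInt q n ≠ 0) (hq1 : q ≠ 1) {b : ℕ → K} (hb0 : b 0 = 1)
    (hb : ∀ n : ℕ, 2 ≤ n → ∑ k ∈ Finset.range n, qChoose q n k * b k = 0) (N : ℕ) :
    qT q b N = (q - q ^ N) * b N / (q - 1) := by
  have hA := LA hq hb0 hb (N + 1) (by omega)
  have hB := LB hq hq1 hb0 hb (N + 1) (by omega)
  rw [Nat.add_sub_cancel] at hA hB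
  rw [← TT' hq b (N + 1), ← TT' hq b N] at hB
  rw [eq_div_iff (sub_ne_zero.mpr hq1)]
  apply mul_left_cancel₀ (hq (N + 1) (by omega))
  linear_combination hB - hA

lemma key2 {q : K} (hq : ∀ n : ℕ, 1 ≤ n → qInt q n ≠ 0) {b : ℕ → K} (hb0 : b 0 = 1) (N : ℕ) :
    ∑ r ∈ Finset.range N,
      q ^ (N - (r + 1)) * qChoose q N (r + 1) * qS q b (r + 1) * b (N - (r + 1)) =
      qT q b N - q ^ N * b N := by
  rw [qT, Finset.sum_range_succ', Nat.sub_zero, qChoose_zero hq, qS_zero hq hb0]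
  ring

lemma LI {q : K} (hq : ∀ n : ℕ, 1 ≤ n → qInt q n ≠ 0) (hq0 : q ≠ 0) (hq1 : q ≠ 1)
    {b : ℕ → K} (hb0 : b 0 = 1)
    (hb : ∀ n : ℕ, 2 ≤ n → ∑ k ∈ Finset.range n, qChoose q n k * b k = 0)
    {αB : ℕ → K}
    (hαB : ∀ k : ℕ, 1 ≤ k → αB k = -(1 / q) * ∑ j ∈ Finset.range (k + 1), qChoose q k j * b j)
    (N : ℕ) :
    ∑ m ∈ Finset.Icc 1 N, q ^ (N - m) * qChoose q N m * αB m * b (N - m) =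
      qInt q N * b N := by
  have e0 : ∑ m ∈ Finset.Icc 1 N, q ^ (N - m) * qChoose q N m * αB m * b (N - m) =
      ∑ r ∈ Finset.range N, q ^ (N - (r + 1)) * qChoose q N (r + 1) * αB (r + 1) * b (N - (r + 1)) := by
    rw [← Finset.Ico_add_one_right_eq_Icc, Finset.sum_Ico_eq_sum_range, show N + 1 - 1 = N by omega]
    exact Finset.sum_congr rfl fun r _ => by rw [Nat.add_comm 1 r]
  rw [e0]
  have e1 : ∀ r ∈ Finset.range N,
      q ^ (N - (r + 1)) * qChoose q N (r + 1) * αB (r + 1) * b (N - (r + 1)) =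
      -(1 / q) * (q ^ (N - (r + 1)) * qChoose q N (r + 1) * qS q b (r + 1) * b (N - (r + 1))) := by
    intro r _
    rw [hαB (r + 1) (by omega)]
    rw [show (∑ j ∈ Finset.range (r + 1 + 1), qChoose q (r + 1) j * b j) = qS q b (r + 1) from rfl]
    ring
  rw [Finset.sum_congr rfl e1, ← Finset.mul_sum, key2 hq hb0 N, LT hq hq1 hb0 hb N,
    qInt_eq hq1]
  have h2 : (-1 : K) + q ≠ 0 := by
    rw [add_comm, ← sub_eq_add_neg]; exact sub_ne_zero.mpr hq1
  have hu : (-1 + q) * (-1 + q)⁻¹ = 1 := mul_inv_cancel₀ h2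
  field_simp [h2]
  ring

lemma LII {q : K} (hq : ∀ n : ℕ, 1 ≤ n → qInt q n ≠ 0) (hq0 : q ≠ 0) (hq1 : q ≠ 1)
    {b : ℕ → K} (hb0 : b 0 = 1)
    (hb : ∀ n : ℕ, 2 ≤ n → ∑ k ∈ Finset.range n, qChoose q n k * b k = 0)
    {βB : ℕ → K} (hβB0 : βB 0 = 1)
    (hβB : ∀ m : ℕ, 1 ≤ m →
      βB m = ((q - 1) / q) * ∑ j ∈ Finset.range (m + 1), qChoose q m j * b j)
    (N : ℕ) :
    ∑ r ∈ Finset.range (N + 1), q ^ (N - r) * qChoose q N r * βB r * b (N - r) = b N := by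
  rw [Finset.sum_range_succ', Nat.sub_zero, qChoose_zero hq, hβB0]
  have e1 : ∀ r ∈ Finset.range N,
      q ^ (N - (r + 1)) * qChoose q N (r + 1) * βB (r + 1) * b (N - (r + 1)) =
      ((q - 1) / q) *
        (q ^ (N - (r + 1)) * qChoose q N (r + 1) * qS q b (r + 1) * b (N - (r + 1))) := by
    intro r _
    rw [hβB (r + 1) (by omega)]
    rw [show (∑ j ∈ Finset.range (r + 1 + 1), qChoose q (r + 1) j * b j) = qS q b (r + 1) from rfl]
    ring
  rw [Finset.sum_congr rfl e1, ← Finset.mul_sum, key2 hq hb0 N, LT hq hq1 hb0 hb N]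
  have h2 : (-1 : K) + q ≠ 0 := by
    rw [add_comm, ← sub_eq_add_neg]; exact sub_ne_zero.mpr hq1
  have hu : (-1 + q) * (-1 + q)⁻¹ = 1 := mul_inv_cancel₀ h2
  field_simp [h2]
  ring

lemma coeff_qDeriv (q : K) (v : Fin 2) (P : MvPolynomial (Fin 2) K) (t : Fin 2 →₀ ℕ) :
    coeff t (qDeriv q v P) = coeff (t + Finsupp.single v 1) P * qInt q (t v + 1) := by
  classical
  rw [qDeriv, coeff_sum]
  have e : ∀ m ∈ P.support,
      coeff t (monomial (m - Finsupp.single v 1) (P.coeff m * qInt q (m v))) =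
      if m = t + Finsupp.single v 1 then coeff m P * qInt q (m v) else 0 := by
    intro m _
    rw [coeff_monomial]
    by_cases h : m = t + Finsupp.single v 1
    · subst h
      rw [if_pos (add_tsub_cancel_right _ _), if_pos rfl]
    · rw [if_neg h]
      by_cases h2 : m - Finsupp.single v 1 = t
      · rw [if_pos h2]
        have hv : m v = 0 := by
          by_contra hv
          apply h
          have hle : Finsupp.single v 1 ≤ m := by
            rw [Finsupp.single_le_iff]; omega
          rw [← h2, tsub_add_cancel_of_le hle]
        rw [hv, qInt_zero, mul_zero]
      · rw [if_neg h2]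
  rw [Finset.sum_congr rfl e,
    Finset.sum_ite_eq' P.support (t + Finsupp.single v 1) (fun m => coeff m P * qInt q (m v))]
  have happ := Finsupp.add_apply t (Finsupp.single v 1) v
  rw [Finsupp.single_eq_same] at happ
  by_cases hmem : t + Finsupp.single v 1 ∈ P.support
  · rw [if_pos hmem, happ]
  · rw [if_neg hmem, MvPolynomial.notMem_support_iff.mp hmem, zero_mul]

lemma coeff_qDeriv_iter {q : K} (hq : ∀ n : ℕ, 1 ≤ n → qInt q n ≠ 0)
    (P : MvPolynomial (Fin 2) K) (m : ℕ) (t : Fin 2 →₀ ℕ) :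
    coeff t ((qDeriv q 0)^[m] P) =
      coeff (t + Finsupp.single 0 m) P * (qFact q (t 0 + m) / qFact q (t 0)) := by
  induction m generalizing t with
  | zero =>
    simp [div_self (qFact_ne_zero hq (t 0))]
  | succ m ih =>
    rw [Function.iterate_succ_apply', coeff_qDeriv, ih (t + Finsupp.single 0 1)]
    have h1 : t + Finsupp.single 0 1 + Finsupp.single 0 m = t + Finsupp.single 0 (m + 1) := by
      rw [add_assoc, ← Finsupp.single_add, Nat.add_comm 1 m]
    have h2 := Finsupp.add_apply t (Finsupp.single (0 : Fin 2) 1) 0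
    rw [Finsupp.single_eq_same] at h2
    rw [h1, h2, show t 0 + 1 + m = t 0 + (m + 1) by omega, qFact_succ q (t 0)]
    have hI : qInt q (t 0 + 1) ≠ 0 := hq (t 0 + 1) (by omega)
    have h3 : qFact q (t 0 + (m + 1)) / (qFact q (t 0) * qInt q (t 0 + 1)) * qInt q (t 0 + 1) =
        qFact q (t 0 + (m + 1)) / qFact q (t 0) := by
      rw [div_mul_eq_mul_div, mul_comm (qFact q (t 0)) (qInt q (t 0 + 1)), ← div_div,
        mul_div_assoc, div_self hI, mul_one]
    rw [mul_assoc, h3]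

lemma substX_eq (c : K) (P : MvPolynomial (Fin 2) K) :
    substX c P = ∑ m ∈ P.support, monomial m (coeff m P * c ^ (m 0)) := by
  rw [substX]
  conv_lhs => rw [P.as_sum]
  rw [map_sum]
  apply Finset.sum_congr rfl
  intro m _
  rw [aeval_monomial, monomial_eq,
    Finsupp.prod_fintype _ _ (fun i => pow_zero _),
    Finsupp.prod_fintype _ _ (fun i => pow_zero _),
    Fin.prod_univ_two, Fin.prod_univ_two]
  have f0 : (if (0 : Fin 2) = 0 then C c * X (0 : Fin 2) else X 1) = C c * X 0 := if_pos rfl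
  have f1 : (if (1 : Fin 2) = 0 then C c * X (0 : Fin 2) else X 1) = X 1 :=
    if_neg (by decide)
  rw [f0, f1, MvPolynomial.algebraMap_eq, map_mul, map_pow, mul_pow]
  ring

lemma coeff_substX (c : K) (P : MvPolynomial (Fin 2) K) (t : Fin 2 →₀ ℕ) :
    coeff t (substX c P) = c ^ (t 0) * coeff t P := by
  classical
  rw [substX_eq, coeff_sum]
  have e : ∀ m ∈ P.support,
      coeff t (monomial m (coeff m P * c ^ (m 0))) =
      if m = t then coeff m P * c ^ (m 0) else 0 := fun m _ => coeff_monomial _ _ _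
  rw [Finset.sum_congr rfl e, Finset.sum_ite_eq' P.support t (fun m => coeff m P * c ^ (m 0))]
  by_cases hmem : t ∈ P.support
  · rw [if_pos hmem, mul_comm]
  · rw [if_neg hmem, MvPolynomial.notMem_support_iff.mp hmem, mul_zero]

lemma single_eq_iff (a b' c d : ℕ) :
    Finsupp.single (0 : Fin 2) a + Finsupp.single (1 : Fin 2) b' =
      Finsupp.single (0 : Fin 2) c + Finsupp.single (1 : Fin 2) d ↔ a = c ∧ b' = d := by
  constructor
  · intro h
    constructor
    · have := DFunLike.congr_fun h 0
      simpa using this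
    · have := DFunLike.congr_fun h 1
      simpa using this
  · rintro ⟨rfl, rfl⟩; rfl

lemma coeff_appell {q : K} (hq : ∀ n : ℕ, 1 ≤ n → qInt q n ≠ 0) (b : ℕ → K) (n j k : ℕ) :
    coeff (Finsupp.single (0 : Fin 2) j + Finsupp.single (1 : Fin 2) k) (appell q b n) =
      if j + k ≤ n then
        qFact q n / (qFact q (n - j - k) * qFact q j * qFact q k) * b (n - j - k) *
          q ^ (k * (k - 1) / 2)
      else 0 := by
  classical
  rw [appell, coeff_sum]
  simp only [coeff_sum, coeff_monomial]
  by_cases hc : j + k ≤ n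
  · rw [if_pos hc]
    rw [Finset.sum_eq_single (n - j - k)]
    · rw [Finset.sum_eq_single j]
      · rw [show n - (n - j - k) - j = k by omega, if_pos rfl]
      · intro j' hj' hne
        rw [if_neg]
        intro heq
        exact hne ((single_eq_iff _ _ _ _).mp heq).1
      · intro habs
        exact absurd (Finset.mem_range.mpr (by omega)) habs
    · intro i hi hne
      rw [Finset.mem_range] at hi
      apply Finset.sum_eq_zero
      intro j' hj'
      rw [Finset.mem_range] at hj'
      rw [if_neg]
      intro heq
      obtain ⟨h1, h2⟩ := (single_eq_iff _ _ _ _).mp heq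
      exact hne (by omega)
    · intro habs
      exact absurd (Finset.mem_range.mpr (by omega)) habs
  · rw [if_neg hc]
    apply Finset.sum_eq_zero
    intro i hi
    rw [Finset.mem_range] at hi
    apply Finset.sum_eq_zero
    intro j' hj'
    rw [Finset.mem_range] at hj'
    rw [if_neg]
    intro heq
    obtain ⟨h1, h2⟩ := (single_eq_iff _ _ _ _).mp heq
    omega

lemma tri_nat (d : ℕ) : (d + 1) * d / 2 = d * (d - 1) / 2 + d := by
  rcases d with _ | e
  · simp
  · rw [show (e + 1 + 1) * (e + 1) = (e + 1) * e + 2 * (e + 1) by ring,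
      Nat.add_mul_div_left _ _ (by norm_num : 0 < 2)]
    simp

end QAux

set_option maxHeartbeats 4000000 in
/-- Partial `q`-difference equation in `x` for 2D `q`-Bernoulli polynomials. -/
theorem qBernoulli2D_qDifference_x
    {K : Type*} [Field K] [CharZero K] (q : K) (hq0 : q ≠ 0) (hq1 : q ≠ 1)
    (hq : ∀ n : ℕ, 1 ≤ n → qInt q n ≠ 0)
    (b : ℕ → K) (hb0 : b 0 = 1)
    (hb : ∀ n : ℕ, 2 ≤ n → ∑ k ∈ Finset.range n, qChoose q n k * b k = 0)
    (αB βB : ℕ → K)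
    (hαB : ∀ k : ℕ, 1 ≤ k → αB k = -(1 / q) * ∑ j ∈ Finset.range (k + 1), qChoose q k j * b j)
    (hβB0 : βB 0 = 1)
    (hβB : ∀ m : ℕ, 1 ≤ m →
      βB m = ((q - 1) / q) * ∑ j ∈ Finset.range (m + 1), qChoose q m j * b j)
    (n : ℕ) (hn : 1 ≤ n) :
    (∑ k ∈ Finset.Icc 1 n, C (q ^ (n - k) / qFact q k) *
        (C (αB k) + C (qInt q k * βB (k - 1)) * X 1) * (qDeriv q 0)^[k] (appell q b n)) +
      C (q ^ n) * X 0 * qDeriv q 0 (appell q b n) -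
      C (qInt q n) * substX q (appell q b n) = 0 := by
  classical
  have hf : ∀ m : ℕ, qFact q m ≠ 0 := QAux.qFact_ne_zero hq
  have hne1 : q - 1 ≠ 0 := sub_ne_zero.mpr hq1
  apply MvPolynomial.ext
  intro t
  rw [coeff_zero]
  obtain ⟨j, k, rfl⟩ : ∃ j k : ℕ,
      t = Finsupp.single (0 : Fin 2) j + Finsupp.single (1 : Fin 2) k := by
    refine ⟨t 0, t 1, ?_⟩
    ext a
    fin_cases a <;> simp
  have hap0 : ∀ a c : ℕ,
      (Finsupp.single (0 : Fin 2) a + Finsupp.single (1 : Fin 2) c) 0 = a := by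
    intro a c
    rw [Finsupp.add_apply, Finsupp.single_eq_same,
      Finsupp.single_eq_of_ne' (by decide : (1 : Fin 2) ≠ 0), add_zero]
  have hap1 : ∀ a c : ℕ,
      (Finsupp.single (0 : Fin 2) a + Finsupp.single (1 : Fin 2) c) 1 = c := by
    intro a c
    rw [Finsupp.add_apply, Finsupp.single_eq_same,
      Finsupp.single_eq_of_ne' (by decide : (0 : Fin 2) ≠ 1), zero_add]
  set F : ℕ → ℕ → K := fun J L =>
    if J + L ≤ n then
      qFact q n / (qFact q (n - J - L) * qFact q J * qFact q L) * b (n - J - L) *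
        q ^ (L * (L - 1) / 2)
    else 0 with hFdef
  have hcA : ∀ J L : ℕ,
      coeff (Finsupp.single (0 : Fin 2) J + Finsupp.single (1 : Fin 2) L) (appell q b n) =
        F J L := fun J L => QAux.coeff_appell hq b n J L
  have hsplit : ∀ (c a g : K) (P : MvPolynomial (Fin 2) K),
      coeff (Finsupp.single (0 : Fin 2) j + Finsupp.single (1 : Fin 2) k)
          (C c * (C a + C g * X 1) * P) =
        c * a * coeff (Finsupp.single (0 : Fin 2) j + Finsupp.single (1 : Fin 2) k) P +
        c * g * (if k = 0 then 0
          else coeff (Finsupp.single (0 : Fin 2) j + Finsupp.single (1 : Fin 2) (k - 1)) P) := by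
    intro c a g P
    have hE : C c * (C a + C g * X 1) * P = C (c * a) * P + C (c * g) * (P * X 1) := by
      rw [map_mul, map_mul]; ring
    rw [hE, coeff_add, coeff_C_mul, coeff_C_mul, MvPolynomial.coeff_mul_X']
    by_cases hk : k = 0
    · rw [if_pos hk, if_neg (by
        rw [Finsupp.mem_support_iff, hap1]
        simpa using hk)]
    · have hsub : (Finsupp.single (0 : Fin 2) j + Finsupp.single (1 : Fin 2) k) -
          Finsupp.single (1 : Fin 2) 1 =
          Finsupp.single (0 : Fin 2) j + Finsupp.single (1 : Fin 2) (k - 1) := by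
        ext a'
        fin_cases a' <;> simp [Finsupp.tsub_apply, Finsupp.single_apply]
      rw [if_pos (Finsupp.mem_support_iff.mpr (by rw [hap1]; exact hk)), if_neg hk, hsub]
  have hterm : ∀ m ∈ Finset.Icc 1 n,
      coeff (Finsupp.single (0 : Fin 2) j + Finsupp.single (1 : Fin 2) k)
        (C (q ^ (n - m) / qFact q m) * (C (αB m) + C (qInt q m * βB (m - 1)) * X 1) *
          (qDeriv q 0)^[m] (appell q b n)) =
      (q ^ (n - m) / qFact q m) * αB m * (F (j + m) k * (qFact q (j + m) / qFact q j)) +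
      (q ^ (n - m) / qFact q m) * (qInt q m * βB (m - 1)) *
        (if k = 0 then 0 else F (j + m) (k - 1) * (qFact q (j + m) / qFact q j)) := by
    intro m _
    rw [hsplit]
    have hit : ∀ L : ℕ,
        coeff (Finsupp.single (0 : Fin 2) j + Finsupp.single (1 : Fin 2) L)
          ((qDeriv q 0)^[m] (appell q b n)) =
          F (j + m) L * (qFact q (j + m) / qFact q j) := by
      intro L
      rw [QAux.coeff_qDeriv_iter hq]
      have h1 : (Finsupp.single (0 : Fin 2) j + Finsupp.single (1 : Fin 2) L) +
          Finsupp.single (0 : Fin 2) m =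
          Finsupp.single (0 : Fin 2) (j + m) + Finsupp.single (1 : Fin 2) L := by
        rw [add_right_comm, ← Finsupp.single_add]
      rw [h1, hcA, hap0]
    rw [hit k]
    congr 1
    by_cases hk : k = 0
    · rw [if_pos hk, if_pos hk]
    · rw [if_neg hk, if_neg hk, hit (k - 1)]
  have hxt : coeff (Finsupp.single (0 : Fin 2) j + Finsupp.single (1 : Fin 2) k)
      (C (q ^ n) * X 0 * qDeriv q 0 (appell q b n)) = q ^ n * (F j k * qInt q j) := by
    rw [mul_assoc, coeff_C_mul, mul_comm (X (0 : Fin 2)), MvPolynomial.coeff_mul_X']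
    by_cases hj : j = 0
    · rw [if_neg (by rw [Finsupp.mem_support_iff, hap0]; simpa using hj), hj, QAux.qInt_zero,
        mul_zero, mul_zero, mul_zero]
    · rw [if_pos (Finsupp.mem_support_iff.mpr (by rw [hap0]; exact hj))]
      have hsub0 : (Finsupp.single (0 : Fin 2) j + Finsupp.single (1 : Fin 2) k) -
          Finsupp.single (0 : Fin 2) 1 =
          Finsupp.single (0 : Fin 2) (j - 1) + Finsupp.single (1 : Fin 2) k := by
        ext a'
        fin_cases a' <;> simp [Finsupp.tsub_apply, Finsupp.single_apply]
      rw [hsub0, QAux.coeff_qDeriv]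
      have h1 : (Finsupp.single (0 : Fin 2) (j - 1) + Finsupp.single (1 : Fin 2) k) +
          Finsupp.single (0 : Fin 2) 1 =
          Finsupp.single (0 : Fin 2) j + Finsupp.single (1 : Fin 2) k := by
        rw [add_right_comm, ← Finsupp.single_add, show j - 1 + 1 = j by omega]
      rw [h1, hcA, hap0, show j - 1 + 1 = j by omega]
  have hst : coeff (Finsupp.single (0 : Fin 2) j + Finsupp.single (1 : Fin 2) k)
      (C (qInt q n) * substX q (appell q b n)) = qInt q n * (q ^ j * F j k) := by
    rw [coeff_C_mul, QAux.coeff_substX, hap0, hcA]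
  rw [coeff_sub, coeff_add, coeff_sum, Finset.sum_congr rfl hterm, Finset.sum_add_distrib,
    hxt, hst]
  by_cases hjk : j + k ≤ n
  · have hSA : (∑ m ∈ Finset.Icc 1 n,
        q ^ (n - m) / qFact q m * αB m * (F (j + m) k * (qFact q (j + m) / qFact q j))) =
        (q ^ (j + k) * q ^ (k * (k - 1) / 2) *
          (qFact q n / (qFact q (n - j - k) * qFact q j * qFact q k))) *
          (qInt q (n - j - k) * b (n - j - k)) := by
      rw [← QAux.LI hq hq0 hq1 hb0 hb hαB (n - j - k), Finset.mul_sum]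
      have hv : ∀ m ∈ Finset.Icc 1 n, m ∉ Finset.Icc 1 (n - j - k) →
          q ^ (n - m) / qFact q m * αB m * (F (j + m) k * (qFact q (j + m) / qFact q j)) = 0 := by
        intro m hm hnot
        rw [Finset.mem_Icc] at hm hnot
        have hz : F (j + m) k = 0 := by
          simp only [hFdef]
          rw [if_neg (by omega)]
        rw [hz]
        ring
      rw [← Finset.sum_subset (Finset.Icc_subset_Icc_right (show n - j - k ≤ n by omega)) hv]
      apply Finset.sum_congr rfl
      intro m hm
      rw [Finset.mem_Icc] at hm
      simp only [hFdef]
      rw [if_pos (show j + m + k ≤ n by omega),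
        show n - (j + m) - k = n - j - k - m by omega,
        show n - m = (j + k) + (n - j - k - m) by omega, pow_add, qChoose]
      simp only [div_mul_eq_mul_div, mul_div_assoc', div_div, div_mul_eq_mul_div]
      rw [div_eq_div_iff (by simp [hf]) (by simp [hf])]
      ring
    by_cases hk0 : k = 0
    · have hSB : (∑ m ∈ Finset.Icc 1 n,
          q ^ (n - m) / qFact q m * (qInt q m * βB (m - 1)) *
            (if k = 0 then 0 else F (j + m) (k - 1) * (qFact q (j + m) / qFact q j))) = 0 :=
        Finset.sum_eq_zero fun m _ => by rw [if_pos hk0]; ring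
      rw [hSA, hSB, add_zero]
      subst hk0
      simp only [hFdef]
      rw [if_pos (show j + 0 ≤ n by omega)]
      simp only [Nat.add_zero, Nat.sub_zero, QAux.qFact_zero, mul_one, Nat.zero_mul,
        Nat.zero_div, pow_zero]
      rw [QAux.qInt_eq hq1 (n - j), QAux.qInt_eq hq1 j, QAux.qInt_eq hq1 n,
        show q ^ n = q ^ j * q ^ (n - j) by rw [← pow_add]; congr 1; omega]
      field_simp [hf, hne1]
      ring
    · have hSB : (∑ m ∈ Finset.Icc 1 n,
          q ^ (n - m) / qFact q m * (qInt q m * βB (m - 1)) *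
            (if k = 0 then 0 else F (j + m) (k - 1) * (qFact q (j + m) / qFact q j))) =
          (q ^ (j + k - 1) * q ^ ((k - 1) * (k - 1 - 1) / 2) *
            (qFact q n / (qFact q (n - j - k) * qFact q j * qFact q (k - 1)))) *
            b (n - j - k) := by
        rw [← QAux.LII hq hq0 hq1 hb0 hb hβB0 hβB (n - j - k), Finset.mul_sum]
        have hv : ∀ m ∈ Finset.Icc 1 n, m ∉ Finset.Icc 1 (n - j - k + 1) →
            q ^ (n - m) / qFact q m * (qInt q m * βB (m - 1)) *
              (if k = 0 then 0 else F (j + m) (k - 1) * (qFact q (j + m) / qFact q j)) = 0 := by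
          intro m hm hnot
          rw [Finset.mem_Icc] at hm hnot
          have hz : F (j + m) (k - 1) = 0 := by
            simp only [hFdef]
            rw [if_neg (by omega)]
          rw [if_neg hk0, hz]
          ring
        rw [← Finset.sum_subset
          (Finset.Icc_subset_Icc_right (show n - j - k + 1 ≤ n by omega)) hv]
        rw [← Finset.Ico_add_one_right_eq_Icc, Finset.sum_Ico_eq_sum_range,
          show n - j - k + 1 + 1 - 1 = n - j - k + 1 by omega]
        apply Finset.sum_congr rfl
        intro r hr
        rw [Finset.mem_range] at hr
        rw [if_neg hk0, show 1 + r - 1 = r by omega]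
        simp only [hFdef]
        rw [if_pos (show j + (1 + r) + (k - 1) ≤ n by omega),
          show n - (j + (1 + r)) - (k - 1) = n - j - k - r by omega,
          show n - (1 + r) = (j + k - 1) + (n - j - k - r) by omega, pow_add,
          show (1 + r) = r + 1 by omega, QAux.qFact_succ q r, qChoose]
        have hr1 : qInt q (r + 1) ≠ 0 := hq (r + 1) (by omega)
        simp only [div_mul_eq_mul_div, mul_div_assoc', div_div, div_mul_eq_mul_div]
        rw [div_eq_div_iff (by simp [hf, hr1]) (by simp [hf, hr1])]
        ring
      rw [hSA, hSB]
      simp only [hFdef]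
      rw [if_pos (show j + k ≤ n by omega)]
      obtain ⟨kk, rfl⟩ : ∃ kk, k = kk + 1 := ⟨k - 1, by omega⟩
      simp only [Nat.add_sub_cancel]
      have hE : q ^ ((kk + 1) * kk / 2) = q ^ (kk * (kk - 1) / 2) * q ^ kk := by
        rw [← pow_add, QAux.tri_nat kk]
      have hq1a : q ^ (j + (kk + 1)) = q ^ j * (q ^ kk * q) := by
        rw [← pow_succ, ← pow_add]
      have hq1b : q ^ (j + (kk + 1) - 1) = q ^ j * q ^ kk := by
        rw [show j + (kk + 1) - 1 = j + kk by omega, ← pow_add]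
      rw [QAux.qFact_succ q kk, hE, hq1a, hq1b,
        show q ^ n = q ^ j * (q ^ kk * q) * q ^ (n - j - (kk + 1)) by
          rw [← pow_succ, ← pow_add, ← pow_add]; congr 1; omega]
      have hW : qFact q n / (qFact q (n - j - (kk + 1)) * qFact q j * qFact q kk) =
          qInt q (kk + 1) *
            (qFact q n /
              (qFact q (n - j - (kk + 1)) * qFact q j * (qFact q kk * qInt q (kk + 1)))) := by
        rw [mul_div_assoc']
        rw [div_eq_div_iff (by simp [hf]) (by simp [hf, hq (kk + 1) (by omega)])]
        ring
      rw [hW]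
      have g1 := QAux.geom q (n - j - (kk + 1))
      have g2 := QAux.geom q j
      have g3 := QAux.geom q n
      have g4 := QAux.geom q (kk + 1)
      have he1 : q ^ n = q ^ j * q ^ kk * q * q ^ (n - j - (kk + 1)) := by
        rw [← pow_add, ← pow_succ, ← pow_add]; congr 1; omega
      have he2 : q ^ (kk + 1) = q ^ kk * q := pow_succ q kk
      have hG' : (q ^ j * q ^ kk * q ^ kk * q * qInt q (n - j - (kk + 1)) +
          q ^ j * q ^ kk * qInt q (kk + 1) +
          q ^ j * q ^ kk * q ^ kk * q * q ^ (n - j - (kk + 1)) * qInt q j -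
          q ^ j * q ^ kk * qInt q n) * (q - 1) = 0 := by
        linear_combination (q ^ j * q ^ kk * q ^ kk * q) * g1 + (q ^ j * q ^ kk) * g4 +
          (q ^ j * q ^ kk * q ^ kk * q * q ^ (n - j - (kk + 1))) * g2 -
          (q ^ j * q ^ kk) * g3 + (q ^ j * q ^ kk) * he2 - (q ^ j * q ^ kk) * he1
      have hG : q ^ j * q ^ kk * q ^ kk * q * qInt q (n - j - (kk + 1)) +
          q ^ j * q ^ kk * qInt q (kk + 1) +
          q ^ j * q ^ kk * q ^ kk * q * q ^ (n - j - (kk + 1)) * qInt q j -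
          q ^ j * q ^ kk * qInt q n = 0 := by
        rcases mul_eq_zero.mp hG' with h | h
        · exact h
        · exact absurd h hne1
      linear_combination (qFact q n /
          (qFact q (n - j - (kk + 1)) * qFact q j * (qFact q kk * qInt q (kk + 1))) *
          b (n - j - (kk + 1)) * q ^ (kk * (kk - 1) / 2)) * hG
  · have hFjk : F j k = 0 := by
      simp only [hFdef]
      rw [if_neg (by omega)]
    have z1 : (∑ m ∈ Finset.Icc 1 n,
        q ^ (n - m) / qFact q m * αB m * (F (j + m) k * (qFact q (j + m) / qFact q j))) = 0 := by
      apply Finset.sum_eq_zero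
      intro m hm
      have hz : F (j + m) k = 0 := by
        simp only [hFdef]
        rw [if_neg (by omega)]
      rw [hz]
      ring
    have z2 : (∑ m ∈ Finset.Icc 1 n,
        q ^ (n - m) / qFact q m * (qInt q m * βB (m - 1)) *
          (if k = 0 then 0 else F (j + m) (k - 1) * (qFact q (j + m) / qFact q j))) = 0 := by
      apply Finset.sum_eq_zero
      intro m hm
      rw [Finset.mem_Icc] at hm
      by_cases hk : k = 0
      · rw [if_pos hk]; ring
      · have hz : F (j + m) (k - 1) = 0 := by
          simp only [hFdef]
          rw [if_neg (by omega)]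
        rw [if_neg hk, hz]
        ring
    rw [z1, z2, hFjk]
    ring
end
end
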